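/- arXiv:1509.06276 — 2 statements merged into one kernel-verified Lean document; each statement's English description precedes it below -/
import Mathlib

section
/- Let (A,Γ,G) be a GIFS on ℝ^d satisfying the open set condition, with invariant sets E_1,…,E_N, similarity dimension δ, and 0 < h_i := H^δ(E_i) < ∞ for all i. Then for every vertex i, the restricted Hausdorff measure μ_i = H^δ|_{E_i} equals the pushforward of the Markov measure P_i under the projection π_i, i.e. μ_i = P_i ∘ π_i^{−1}. -/
open MeasureTheory Set

noncomputable section

/-- A graph-directed iterated function system (GIFS) with vertex set `Fin N`,
a finite edge set, and a contracting similitude of ratio `r e ∈ (0,1)` for each edge. -/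
structure GIFS (X : Type) [MetricSpace X] (N : ℕ) where
  Edge : Type
  fintypeEdge : Fintype Edge
  src : Edge → Fin N
  tgt : Edge → Fin N
  r : Edge → ℝ
  r_pos : ∀ e, 0 < r e
  r_lt_one : ∀ e, r e < 1
  g : Edge → X → X
  g_sim : ∀ e x y, dist (g e x) (g e y) = r e * dist x y

attribute [instance] GIFS.fintypeEdge

/-- The finite prefix of length `n` of an infinite word. -/
def prefixList {α : Type} (ω : ℕ → α) (n : ℕ) : List α := List.ofFn fun k : Fin n => ω k

/-- Spectral radius of a real square matrix: supremum of the moduli of its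
complex eigenvalues. -/
def specRad {n : ℕ} (A : Matrix (Fin n) (Fin n) ℝ) : ℝ :=
  sSup ((fun z : ℂ => ‖z‖) '' spectrum ℂ (A.map Complex.ofReal))

namespace GIFS

variable {X : Type} [MetricSpace X] {N : ℕ}

/-- `γ` is a finite path (possibly empty) starting from the vertex `i`. -/
def IsPathFrom (G : GIFS X N) (i : Fin N) (γ : List G.Edge) : Prop :=
  γ.Chain' (fun a b => G.tgt a = G.src b) ∧ ∀ e ∈ γ.head?, G.src e = i

/-- The terminal vertex of a finite path starting at `i`. -/
def pathTgt (G : GIFS X N) (i : Fin N) (γ : List G.Edge) : Fin N :=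
  (γ.getLast?).elim i G.tgt

/-- The composition `g_{γ₁} ∘ ⋯ ∘ g_{γ_n}` along a finite path. -/
def pathMap (G : GIFS X N) (γ : List G.Edge) : X → X :=
  γ.foldr (fun e f => G.g e ∘ f) id

/-- The cylinder set `E_γ = g_{γ₁} ∘ ⋯ ∘ g_{γ_n} (E_{t(γ)})` of a finite path from `i`. -/
def pathSet (G : GIFS X N) (E : Fin N → Set X) (i : Fin N) (γ : List G.Edge) : Set X :=
  G.pathMap γ '' E (G.pathTgt i γ)

/-- `E` is the family of invariant sets of the GIFS: nonempty compact sets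
satisfying the set equations. -/
def IsInvariant (G : GIFS X N) (E : Fin N → Set X) : Prop :=
  (∀ i, (E i).Nonempty) ∧ (∀ i, IsCompact (E i)) ∧
    ∀ i, E i = ⋃ e ∈ {e : G.Edge | G.src e = i}, G.g e '' E (G.tgt e)

/-- The open set condition witnessed by a given family of open sets. -/
def OSCWith (G : GIFS X N) (U : Fin N → Set X) : Prop :=
  (∀ i, (U i).Nonempty ∧ IsOpen (U i)) ∧
  (∀ e : G.Edge, G.g e '' U (G.tgt e) ⊆ U (G.src e)) ∧
  ∀ e f : G.Edge, e ≠ f → G.src e = G.src f →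
    Disjoint (G.g e '' U (G.tgt e)) (G.g f '' U (G.tgt f))

/-- The open set condition. -/
def OSC (G : GIFS X N) : Prop := ∃ U, G.OSCWith U

/-- The base graph is strongly connected. -/
def StronglyConnected (G : GIFS X N) : Prop :=
  ∀ i j : Fin N, ∃ γ : List G.Edge, γ ≠ [] ∧ G.IsPathFrom i γ ∧ G.pathTgt i γ = j

/-- The matrix `M(t)` with entries `M(t)_{ij} = ∑_{e ∈ Γ_{ij}} r_e ^ t`. -/
def M (G : GIFS X N) (t : ℝ) : Matrix (Fin N) (Fin N) ℝ :=
  Matrix.of fun i j => ∑ e : G.Edge, if G.src e = i ∧ G.tgt e = j then G.r e ^ t else 0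

/-- `δ` is the similarity dimension: the (unique) positive real with `ρ(M(δ)) = 1`. -/
def IsSimDim (G : GIFS X N) (δ : ℝ) : Prop := 0 < δ ∧ specRad (G.M δ) = 1

/-- The space of infinite paths emanating from the vertex `i`. -/
def InfPath (G : GIFS X N) (i : Fin N) : Type :=
  {ω : ℕ → G.Edge // G.src (ω 0) = i ∧ ∀ n, G.tgt (ω n) = G.src (ω (n + 1))}

instance (G : GIFS X N) : MeasurableSpace G.Edge := ⊤

instance (G : GIFS X N) (i : Fin N) : MeasurableSpace (G.InfPath i) :=
  MeasurableSpace.comap Subtype.val MeasurableSpace.pi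

/-- `π` is the symbolic projection `Γ_i^∞ → E_i` : the image of an infinite path
belongs to every cylinder set of its finite prefixes. -/
def IsCoding (G : GIFS X N) (E : Fin N → Set X) (i : Fin N) (π : G.InfPath i → X) : Prop :=
  ∀ (ω : G.InfPath i) (n : ℕ), π ω ∈ G.pathSet E i (prefixList ω.1 n)

end GIFS

/-- An ordered GIFS: a GIFS with a partial order on the edges which restricts to
a linear order on each `Γ_i` (edges emanating from `i`), edges emanating from
distinct vertices being incomparable. -/
structure OGIFS (X : Type) [MetricSpace X] (N : ℕ) extends GIFS X N where
  elt : Edge → Edge → Prop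
  elt_src : ∀ {a b}, elt a b → src a = src b
  elt_irrefl : ∀ a, ¬ elt a a
  elt_trans : ∀ {a b c}, elt a b → elt b c → elt a c
  elt_total : ∀ a b, src a = src b → elt a b ∨ a = b ∨ elt b a

namespace OGIFS

variable {X : Type} [MetricSpace X] {N : ℕ}

/-- The induced dictionary order on finite paths. -/
def PathLt (G : OGIFS X N) (γ ω : List G.Edge) : Prop := List.Lex G.elt γ ω

/-- Two adjacent edges in some `Γ_i`: consecutive in the order `≺`. -/
def AdjacentEdges (G : OGIFS X N) (e f : G.Edge) : Prop :=
  G.elt e f ∧ ¬ ∃ e', G.elt e e' ∧ G.elt e' f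

/-- Two same-length paths from `i`, adjacent (consecutive) in the dictionary order. -/
def Adjacent (G : OGIFS X N) (i : Fin N) (γ ω : List G.Edge) : Prop :=
  G.toGIFS.IsPathFrom i γ ∧ G.toGIFS.IsPathFrom i ω ∧ γ.length = ω.length ∧
  G.PathLt γ ω ∧
  ¬ ∃ η : List G.Edge, G.toGIFS.IsPathFrom i η ∧ η.length = γ.length ∧
      G.PathLt γ η ∧ G.PathLt η ω

/-- A linear GIFS: every two adjacent cylinders of invariant sets intersect. -/
def IsLinear (G : OGIFS X N) (E : Fin N → Set X) : Prop :=
  ∀ (i : Fin N) (γ ω : List G.Edge), G.Adjacent i γ ω →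
    (G.toGIFS.pathSet E i γ ∩ G.toGIFS.pathSet E i ω).Nonempty

/-- An infinite path from `i` is lowest if all its finite prefixes are lowest in the
dictionary order among same-length paths from `i`. -/
def IsLowest (G : OGIFS X N) (i : Fin N) (ω : G.toGIFS.InfPath i) : Prop :=
  ∀ (n : ℕ) (γ : List G.Edge), G.toGIFS.IsPathFrom i γ → γ.length = n →
    γ = prefixList ω.1 n ∨ G.PathLt (prefixList ω.1 n) γ

/-- An infinite path from `i` is highest if all its finite prefixes are highest. -/
def IsHighest (G : OGIFS X N) (i : Fin N) (ω : G.toGIFS.InfPath i) : Prop :=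
  ∀ (n : ℕ) (γ : List G.Edge), G.toGIFS.IsPathFrom i γ → γ.length = n →
    γ = prefixList ω.1 n ∨ G.PathLt γ (prefixList ω.1 n)

/-- `a` is the head of `E_i`: the projection of the lowest infinite path from `i`. -/
def IsHead (G : OGIFS X N) (E : Fin N → Set X) (i : Fin N) (a : X) : Prop :=
  ∃ ω : G.toGIFS.InfPath i, G.IsLowest i ω ∧
    ∀ n : ℕ, a ∈ G.toGIFS.pathSet E i (prefixList ω.1 n)

/-- `a` is the tail of `E_i`: the projection of the highest infinite path from `i`. -/
def IsTail (G : OGIFS X N) (E : Fin N → Set X) (i : Fin N) (a : X) : Prop :=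
  ∃ ω : G.toGIFS.InfPath i, G.IsHighest i ω ∧
    ∀ n : ℕ, a ∈ G.toGIFS.pathSet E i (prefixList ω.1 n)

/-- The chain condition: for adjacent edges `e ≺ f` emanating from a common vertex,
`g_e(tail of E_{t(e)}) = g_f(head of E_{t(f)})`. -/
def ChainCondition (G : OGIFS X N) (E : Fin N → Set X) : Prop :=
  ∀ e f : G.Edge, G.AdjacentEdges e f →
    ∀ b a : X, G.IsTail E (G.tgt e) b → G.IsHead E (G.tgt f) a → G.g e b = G.g f a

open Classical in
/-- Translation part of the maps of the measure-recording GIFS: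
`b_e = ∑_{e' ≺ e} h_{t(e')} r_{e'}^δ`. -/
def bCoef (G : OGIFS X N) (δ : ℝ) (h : Fin N → ℝ) (e : G.Edge) : ℝ :=
  ∑ e' : G.Edge, if G.elt e' e then h (G.tgt e') * G.r e' ^ δ else 0

/-- The maps `f_e (x) = r_e^δ x + b_e` of the measure-recording GIFS. -/
def fmap (G : OGIFS X N) (δ : ℝ) (h : Fin N → ℝ) (e : G.Edge) : ℝ → ℝ :=
  fun x => G.r e ^ δ * x + G.bCoef δ h e

/-- Composition of the measure-recording maps along a finite path. -/
def fPathMap (G : OGIFS X N) (δ : ℝ) (h : Fin N → ℝ) (γ : List G.Edge) : ℝ → ℝ :=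
  γ.foldr (fun e f => G.fmap δ h e ∘ f) id

/-- Cylinder intervals `F_γ` of the measure-recording GIFS (with `F_i = [0, h_i]`). -/
def fPathSet (G : OGIFS X N) (δ : ℝ) (h : Fin N → ℝ) (i : Fin N) (γ : List G.Edge) : Set ℝ :=
  G.fPathMap δ h γ '' Icc 0 (h (G.toGIFS.pathTgt i γ))

/-- `ρ` is the symbolic projection `Γ_i^∞ → F_i` of the measure-recording GIFS. -/
def IsFCoding (G : OGIFS X N) (δ : ℝ) (h : Fin N → ℝ) (i : Fin N)
    (ρ : G.toGIFS.InfPath i → ℝ) : Prop :=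
  ∀ (ω : G.toGIFS.InfPath i) (n : ℕ), ρ ω ∈ G.fPathSet δ h i (prefixList ω.1 n)

end OGIFS

/-- An optimal parametrization of an `s`-set `K`: a surjection `[0,1] → K` which is
almost one-to-one, measure-preserving and `1/s`-Hölder continuous. -/
def OptimalParam {X : Type} [MetricSpace X] [MeasurableSpace X] [BorelSpace X]
    (s : ℝ) (K : Set X) (ψ : ℝ → X) : Prop :=
  ψ '' Icc (0:ℝ) 1 = K ∧
  (∃ K' ⊆ K, ∃ I' ⊆ Icc (0:ℝ) 1,
      μH[s] (K \ K') = 0 ∧ volume (Icc (0:ℝ) 1 \ I') = 0 ∧ BijOn ψ I' K') ∧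
  (∀ F : Set ℝ, F ⊆ Icc (0:ℝ) 1 → MeasurableSet F →
      μH[s] (ψ '' F) = μH[s] K * volume F) ∧
  (∀ B : Set X, B ⊆ K → MeasurableSet B →
      volume (ψ ⁻¹' B ∩ Icc (0:ℝ) 1) = (μH[s] K)⁻¹ * μH[s] B) ∧
  ∃ c' : NNReal, 0 < c' ∧ HolderOnWith c' (Real.toNNReal (1 / s)) ψ (Icc (0:ℝ) 1)

end
noncomputable section
section Aux

namespace GIFS

variable {X : Type} [MetricSpace X] {N : ℕ} (G : GIFS X N)

lemma pathMap_nil : G.pathMap ([] : List G.Edge) = id := rfl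

lemma pathMap_cons (e : G.Edge) (γ : List G.Edge) :
    G.pathMap (e :: γ) = G.g e ∘ G.pathMap γ := rfl

lemma pathMap_append (γ η : List G.Edge) :
    G.pathMap (γ ++ η) = G.pathMap γ ∘ G.pathMap η := by
  induction γ with
  | nil => rfl
  | cons e γ ih =>
      simp only [List.cons_append, pathMap_cons, ih]
      rfl

lemma pathTgt_nil (i : Fin N) : G.pathTgt i [] = i := rfl

lemma pathTgt_cons (i : Fin N) (e : G.Edge) (γ : List G.Edge) :
    G.pathTgt i (e :: γ) = G.pathTgt (G.tgt e) γ := by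
  cases γ with
  | nil => rfl
  | cons f γ =>
      show (e :: f :: γ).getLast?.elim i G.tgt = (f :: γ).getLast?.elim (G.tgt e) G.tgt
      rw [List.getLast?_cons_cons]
      cases h : (f :: γ).getLast? with
      | none => simp at h
      | some a => rfl

lemma pathTgt_concat (i : Fin N) (γ : List G.Edge) (e : G.Edge) :
    G.pathTgt i (γ ++ [e]) = G.tgt e := by
  simp [GIFS.pathTgt, List.getLast?_concat]

lemma isPathFrom_nil (i : Fin N) : G.IsPathFrom i [] := by
  constructor
  · exact List.isChain_nil
  · intro e he; simp at he

lemma isPathFrom_cons {i : Fin N} {e : G.Edge} {γ : List G.Edge} :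
    G.IsPathFrom i (e :: γ) ↔ G.src e = i ∧ G.IsPathFrom (G.tgt e) γ := by
  unfold GIFS.IsPathFrom
  simp only [List.Chain', List.isChain_cons]
  constructor
  · rintro ⟨⟨h1, h2⟩, h3⟩
    refine ⟨h3 e rfl, h2, fun f hf => (h1 f hf).symm⟩
  · rintro ⟨h1, h2, h3⟩
    exact ⟨⟨fun f hf => (h3 f hf).symm, h2⟩, fun f hf => by
      simp only [List.head?_cons, Option.mem_def, Option.some.injEq] at hf
      subst hf; exact h1⟩

lemma isPathFrom_concat {i : Fin N} {γ : List G.Edge} {e : G.Edge}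
    (hγ : G.IsPathFrom i γ) (he : G.src e = G.pathTgt i γ) :
    G.IsPathFrom i (γ ++ [e]) := by
  induction γ generalizing i with
  | nil => simpa [isPathFrom_cons, pathTgt_nil] using ⟨he, G.isPathFrom_nil _⟩
  | cons f γ ih =>
      rw [isPathFrom_cons] at hγ
      rw [pathTgt_cons] at he
      rw [List.cons_append, isPathFrom_cons]
      exact ⟨hγ.1, ih hγ.2 he⟩

end GIFS

lemma prefixList_zero {α : Type} (ω : ℕ → α) : prefixList ω 0 = [] := rfl

lemma prefixList_length {α : Type} (ω : ℕ → α) (n : ℕ) : (prefixList ω n).length = n := by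
  simp [prefixList]

lemma prefixList_succ {α : Type} (ω : ℕ → α) (n : ℕ) :
    prefixList ω (n + 1) = prefixList ω n ++ [ω n] := by
  unfold prefixList
  rw [List.ofFn_succ']
  simp [List.concat_eq_append]

lemma prefixList_inj {α : Type} {ω ω' : ℕ → α} {n : ℕ}
    (h : prefixList ω n = prefixList ω' n) (k : ℕ) (hk : k < n) : ω k = ω' k := by
  unfold prefixList at h
  rw [List.ofFn_inj] at h
  exact congrFun h ⟨k, hk⟩

end Aux
section Aux2

namespace GIFS

variable {X : Type} [MetricSpace X] {N : ℕ} (G : GIFS X N)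

lemma pathMap_dist (γ : List G.Edge) (x y : X) :
    dist (G.pathMap γ x) (G.pathMap γ y) = (γ.map G.r).prod * dist x y := by
  induction γ with
  | nil => simp [pathMap_nil]
  | cons e γ ih =>
      simp only [pathMap_cons, Function.comp_apply, G.g_sim, ih, List.map_cons,
        List.prod_cons, mul_assoc]

lemma rprod_pos (γ : List G.Edge) : 0 < (γ.map G.r).prod := by
  induction γ with
  | nil => simp
  | cons e γ ih => simpa using mul_pos (G.r_pos e) ih

lemma pathMap_lipschitz (γ : List G.Edge) :
    LipschitzWith ((γ.map G.r).prod).toNNReal (G.pathMap γ) := by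
  apply LipschitzWith.of_dist_le_mul
  intro x y
  rw [G.pathMap_dist, Real.coe_toNNReal _ (G.rprod_pos γ).le]

lemma pathMap_injective (γ : List G.Edge) : Function.Injective (G.pathMap γ) := by
  intro x y hxy
  have h := G.pathMap_dist γ x y
  rw [hxy, dist_self] at h
  have := (mul_eq_zero.1 h.symm).resolve_left (ne_of_gt (G.rprod_pos γ))
  exact dist_eq_zero.1 this

variable {E : Fin N → Set X}

lemma pathSet_nil (i : Fin N) : G.pathSet E i [] = E i := by
  simp [GIFS.pathSet, pathTgt_nil, pathMap_nil]

lemma pathSet_cons (i : Fin N) (e : G.Edge) (γ : List G.Edge) :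
    G.pathSet E i (e :: γ) = G.g e '' G.pathSet E (G.tgt e) γ := by
  unfold GIFS.pathSet
  rw [pathTgt_cons, pathMap_cons, Set.image_comp]

lemma IsInvariant.g_image_subset (hE : G.IsInvariant E) (e : G.Edge) :
    G.g e '' E (G.tgt e) ⊆ E (G.src e) := by
  rw [hE.2.2 (G.src e)]
  exact Set.subset_biUnion_of_mem (u := fun e => G.g e '' E (G.tgt e)) rfl

lemma pathSet_subset_root (hE : G.IsInvariant E) {j : Fin N} {γ : List G.Edge}
    (hγ : G.IsPathFrom j γ) : G.pathSet E j γ ⊆ E j := by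
  induction γ generalizing j with
  | nil => rw [pathSet_nil]
  | cons e γ ih =>
      rw [G.isPathFrom_cons] at hγ
      rw [pathSet_cons]
      calc G.g e '' G.pathSet E (G.tgt e) γ ⊆ G.g e '' E (G.tgt e) :=
            Set.image_mono (ih hγ.2)
        _ ⊆ E (G.src e) := hE.g_image_subset G e
        _ = E j := by rw [hγ.1]

lemma pathSet_concat_subset (hE : G.IsInvariant E) {i : Fin N} {γ : List G.Edge} {e : G.Edge}
    (he : G.src e = G.pathTgt i γ) :
    G.pathSet E i (γ ++ [e]) ⊆ G.pathSet E i γ := by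
  unfold GIFS.pathSet
  rw [pathMap_append, pathTgt_concat, Set.image_comp]
  apply Set.image_mono
  have : G.pathMap [e] '' E (G.tgt e) ⊆ E (G.src e) := by
    have := hE.g_image_subset G e
    simpa [pathMap_cons, pathMap_nil] using this
  rw [he] at this
  exact this

lemma prefix_pathTgt {i : Fin N} (ω : G.InfPath i) (n : ℕ) :
    G.pathTgt i (prefixList ω.1 n) = G.src (ω.1 n) := by
  cases n with
  | zero => exact ω.2.1.symm
  | succ n =>
      rw [prefixList_succ, pathTgt_concat]
      exact ω.2.2 n

lemma prefix_isPathFrom {i : Fin N} (ω : G.InfPath i) (n : ℕ) :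
    G.IsPathFrom i (prefixList ω.1 n) := by
  induction n with
  | zero => exact G.isPathFrom_nil i
  | succ n ih =>
      rw [prefixList_succ]
      exact G.isPathFrom_concat ih (G.prefix_pathTgt ω n).symm

lemma prefix_pathSet_antitone (hE : G.IsInvariant E) {i : Fin N} (ω : G.InfPath i) (n : ℕ) :
    G.pathSet E i (prefixList ω.1 (n + 1)) ⊆ G.pathSet E i (prefixList ω.1 n) := by
  rw [prefixList_succ]
  exact G.pathSet_concat_subset hE (G.prefix_pathTgt ω n).symm

end GIFS

end Aux2
section Aux3

open ENNReal

lemma hausdorff_image_sim {d : ℕ} (f : EuclideanSpace ℝ (Fin d) → EuclideanSpace ℝ (Fin d))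
    {r : ℝ} (hr : 0 < r) (hf : ∀ x y, dist (f x) (f y) = r * dist x y)
    {δ : ℝ} (hδ : 0 ≤ δ) (S : Set (EuclideanSpace ℝ (Fin d))) :
    μH[δ] (f '' S) = ENNReal.ofReal r ^ δ * μH[δ] S := by
  have hlip : LipschitzWith r.toNNReal f :=
    LipschitzWith.of_dist_le_mul fun x y => by
      rw [hf, Real.coe_toNNReal _ hr.le]
  have h1 : μH[δ] (f '' S) ≤ ENNReal.ofReal r ^ δ * μH[δ] S :=
    hlip.hausdorffMeasure_image_le hδ S
  have finj : Function.Injective f := by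
    intro x y hxy
    have h := hf x y
    rw [hxy, dist_self] at h
    exact dist_eq_zero.1 ((mul_eq_zero.1 h.symm).resolve_left (ne_of_gt hr))
  have hinv : ∀ x, Function.invFun f (f x) = x := fun x => Function.leftInverse_invFun finj x
  have hlip2 : LipschitzOnWith (r⁻¹).toNNReal (Function.invFun f) (f '' S) := by
    intro a ha b hb
    obtain ⟨x, -, rfl⟩ := ha
    obtain ⟨y, -, rfl⟩ := hb
    rw [edist_dist, edist_dist, hinv, hinv]
    have : dist x y = r⁻¹ * dist (f x) (f y) := by
      rw [hf]; field_simp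
    rw [this, ENNReal.ofReal_mul (by positivity)]
    gcongr
    exact le_rfl
  have h2 : μH[δ] S ≤ ENNReal.ofReal r⁻¹ ^ δ * μH[δ] (f '' S) := by
    have h3 := hlip2.hausdorffMeasure_image_le hδ
    have himg : Function.invFun f '' (f '' S) = S := by
      rw [Set.image_image]
      simp only [hinv, Set.image_id']
    rwa [himg] at h3
  have hc0 : (ENNReal.ofReal r ^ δ) ≠ 0 := by
    apply ne_of_gt
    exact ENNReal.rpow_pos (ENNReal.ofReal_pos.2 hr) ENNReal.ofReal_ne_top
  have hctop : (ENNReal.ofReal r ^ δ) ≠ ⊤ :=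
    ENNReal.rpow_ne_top_of_nonneg hδ ENNReal.ofReal_ne_top
  have hcinv : ENNReal.ofReal r⁻¹ ^ δ = (ENNReal.ofReal r ^ δ)⁻¹ := by
    rw [ENNReal.ofReal_inv_of_pos hr, ← ENNReal.inv_rpow]
  refine le_antisymm h1 ?_
  calc ENNReal.ofReal r ^ δ * μH[δ] S
      ≤ ENNReal.ofReal r ^ δ * (ENNReal.ofReal r⁻¹ ^ δ * μH[δ] (f '' S)) := by gcongr
    _ = μH[δ] (f '' S) := by
        rw [hcinv, ← mul_assoc, ENNReal.mul_inv_cancel hc0 hctop, one_mul]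

end Aux3
section Aux4

namespace GIFS

variable {d N : ℕ} (G : GIFS (EuclideanSpace ℝ (Fin d)) N)
  (E : Fin N → Set (EuclideanSpace ℝ (Fin d))) {δ : ℝ}

lemma measure_pathSet (hδ : 0 ≤ δ) (i : Fin N) (γ : List G.Edge) :
    μH[δ] (G.pathSet E i γ)
      = ENNReal.ofReal ((γ.map G.r).prod ^ δ) * μH[δ] (E (G.pathTgt i γ)) := by
  unfold GIFS.pathSet
  rw [hausdorff_image_sim (G.pathMap γ) (G.rprod_pos γ) (G.pathMap_dist γ) hδ,
    ENNReal.ofReal_rpow_of_pos (G.rprod_pos γ)]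

lemma markov_prod (h : Fin N → ℝ) (hpos : ∀ j, 0 < h j) (hδ : 0 ≤ δ) {i : Fin N}
    {γ : List G.Edge} (hγ : G.IsPathFrom i γ) :
    h i * (γ.map fun e => h (G.tgt e) * G.r e ^ δ / h (G.src e)).prod
      = (γ.map G.r).prod ^ δ * h (G.pathTgt i γ) := by
  induction γ generalizing i with
  | nil => simp [GIFS.pathTgt, Real.rpow_natCast]
  | cons e γ ih =>
      rw [G.isPathFrom_cons] at hγ
      obtain ⟨h1, h2⟩ := hγ
      rw [List.map_cons, List.prod_cons, G.pathTgt_cons, List.map_cons, List.prod_cons,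
        Real.mul_rpow (G.r_pos e).le (G.rprod_pos γ).le]
      have key : ∀ P : ℝ, h i * (h (G.tgt e) * G.r e ^ δ / h (G.src e) * P)
          = G.r e ^ δ * (h (G.tgt e) * P) := by
        intro P
        rw [h1]
        field_simp [(hpos i).ne']
      rw [key, ih h2]
      ring

lemma prodp_pos (h : Fin N → ℝ) (hpos : ∀ j, 0 < h j) (γ : List G.Edge) :
    0 < (γ.map fun e => h (G.tgt e) * G.r e ^ δ / h (G.src e)).prod := by
  induction γ with
  | nil => simp
  | cons e γ ih =>
      rw [List.map_cons, List.prod_cons]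
      have : 0 < h (G.tgt e) * G.r e ^ δ / h (G.src e) := by
        apply div_pos (mul_pos (hpos _) (Real.rpow_pos_of_pos (G.r_pos e) δ)) (hpos _)
      exact mul_pos this ih

lemma measure_pathSet_eq (hδ : 0 < δ)
    (hfin : ∀ j, 0 < μH[δ] (E j) ∧ μH[δ] (E j) < ⊤)
    (h : Fin N → ℝ) (hh : ∀ j, h j = (μH[δ] (E j)).toReal)
    {i : Fin N} {γ : List G.Edge} (hγ : G.IsPathFrom i γ) :
    μH[δ] (G.pathSet E i γ)
      = ENNReal.ofReal (h i * (γ.map fun e => h (G.tgt e) * G.r e ^ δ / h (G.src e)).prod) := by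
  have hpos : ∀ j, 0 < h j := fun j => by
    rw [hh]; exact ENNReal.toReal_pos (hfin j).1.ne' (hfin j).2.ne
  have hEj : ∀ j, μH[δ] (E j) = ENNReal.ofReal (h j) := fun j => by
    rw [hh, ENNReal.ofReal_toReal (hfin j).2.ne]
  rw [G.measure_pathSet E hδ.le, hEj, ← ENNReal.ofReal_mul (Real.rpow_nonneg (G.rprod_pos γ).le δ),
    G.markov_prod h hpos hδ.le hγ]

end GIFS

end Aux4
section Aux5

namespace GIFS

variable {X : Type} [MetricSpace X] {N : ℕ} (G : GIFS X N)

/-- The cylinder set of a finite path, inside the space of infinite paths. -/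
def cyl (i : Fin N) (γ : List G.Edge) : Set (G.InfPath i) :=
  {ω | prefixList ω.1 γ.length = γ}

lemma measurable_val {i : Fin N} : Measurable (fun ω : G.InfPath i => ω.1) :=
  measurable_iff_comap_le.mpr le_rfl

lemma measurableSet_prefix_eq {α : Type} [MeasurableSpace α] [MeasurableSingletonClass α] (n : ℕ) (γ : List α) :
    MeasurableSet {f : ℕ → α | prefixList f n = γ} := by
  induction n generalizing γ with
  | zero =>
      cases γ with
      | nil => simp [prefixList_zero]
      | cons e γ' =>
          convert MeasurableSet.empty
          ext f; simp [prefixList_zero]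
  | succ n ih =>
      have hsucc : ∀ f : ℕ → α, prefixList f (n + 1) = f 0 :: prefixList (fun k => f (k + 1)) n := by
        intro f
        rw [prefixList, List.ofFn_succ]
        rfl
      cases γ with
      | nil =>
          convert MeasurableSet.empty
          ext f; simp [hsucc]
      | cons e γ' =>
          have : {f : ℕ → α | prefixList f (n + 1) = e :: γ'}
              = (fun f : ℕ → α => f 0) ⁻¹' {e}
                ∩ (fun (f : ℕ → α) (k : ℕ) => f (k + 1)) ⁻¹' {g | prefixList g n = γ'} := by
            ext f
            simp only [Set.mem_setOf_eq, Set.mem_inter_iff, Set.mem_preimage,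
              Set.mem_singleton_iff, hsucc f, List.cons.injEq]
          rw [this]
          refine MeasurableSet.inter ?_ ?_
          · exact measurable_pi_apply 0 (measurableSet_singleton e)
          · exact measurable_pi_lambda _ (fun k => measurable_pi_apply (k + 1)) (ih γ')

instance edgeMeasurableSingletonClass : MeasurableSingletonClass G.Edge :=
  ⟨fun _ => MeasurableSpace.measurableSet_top⟩

lemma measurableSet_cyl (i : Fin N) (γ : List G.Edge) :
    MeasurableSet (G.cyl i γ) := by
  have heq : G.cyl i γ
      = (fun ω : G.InfPath i => ω.1) ⁻¹' {f : ℕ → G.Edge | prefixList f γ.length = γ} := rfl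
  rw [heq]
  exact G.measurable_val (measurableSet_prefix_eq γ.length γ)

lemma cyl_disjoint {i : Fin N} {γ γ' : List G.Edge} (hlen : γ.length = γ'.length)
    (hne : γ ≠ γ') : Disjoint (G.cyl i γ) (G.cyl i γ') := by
  rw [Set.disjoint_left]
  intro ω h1 h2
  exact hne (h1.symm.trans (by rw [hlen]; exact h2))

lemma cyl_nil (i : Fin N) : G.cyl i [] = Set.univ := by
  ext ω; simp [GIFS.cyl, prefixList_zero]

lemma cyl_concat_subset {i : Fin N} {γ : List G.Edge} {e : G.Edge} :
    G.cyl i (γ ++ [e]) ⊆ G.cyl i γ := by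
  intro ω h
  have h' : prefixList ω.1 (γ.length + 1) = γ ++ [e] := by
    simpa [GIFS.cyl, List.length_append] using h
  rw [prefixList_succ] at h'
  have := List.append_inj_left h' (by simp [prefixList_length])
  exact this

lemma cyl_eq_iUnion {i : Fin N} {γ : List G.Edge} :
    G.cyl i γ = ⋃ e ∈ {e : G.Edge | G.src e = G.pathTgt i γ}, G.cyl i (γ ++ [e]) := by
  ext ω
  simp only [Set.mem_iUnion, Set.mem_setOf_eq]
  constructor
  · intro h
    refine ⟨ω.1 γ.length, ?_, ?_⟩
    · have h2 := G.prefix_pathTgt ω γ.length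
      rw [h] at h2
      exact h2.symm
    · show prefixList ω.1 (γ ++ [ω.1 γ.length]).length = γ ++ [ω.1 γ.length]
      rw [List.length_append, List.length_singleton, prefixList_succ, h]
  · rintro ⟨e, -, he⟩
    exact G.cyl_concat_subset he

end GIFS

end Aux5
section Aux6

open ENNReal

namespace GIFS

variable {X : Type} [MetricSpace X] {N : ℕ} (G : GIFS X N)

lemma g_continuous (e : G.Edge) : Continuous (G.g e) := by
  have : LipschitzWith (G.r e).toNNReal (G.g e) :=
    LipschitzWith.of_dist_le_mul fun x y => by
      rw [G.g_sim, Real.coe_toNNReal _ (G.r_pos e).le]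
  exact this.continuous

lemma g_injective (e : G.Edge) : Function.Injective (G.g e) := by
  intro x y hxy
  have h := G.g_sim e x y
  rw [hxy, dist_self] at h
  exact dist_eq_zero.1 ((mul_eq_zero.1 h.symm).resolve_left (ne_of_gt (G.r_pos e)))

lemma pathMap_continuous (γ : List G.Edge) : Continuous (G.pathMap γ) :=
  (G.pathMap_lipschitz γ).continuous

/-- A finite union of sets with pairwise null intersections has measure the sum. -/
lemma measure_biUnion_null_inter {Y : Type} [MeasurableSpace Y] (μ : Measure Y)
    {ι : Type} [DecidableEq ι] (s : Finset ι) (A : ι → Set Y)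
    (hmeas : ∀ k ∈ s, MeasurableSet (A k))
    (hnull : ∀ k ∈ s, ∀ l ∈ s, k ≠ l → μ (A k ∩ A l) = 0) :
    μ (⋃ k ∈ s, A k) = ∑ k ∈ s, μ (A k) := by
  induction s using Finset.induction_on with
  | empty => simp
  | @insert a s ha ih =>
      rw [Finset.set_biUnion_insert, Finset.sum_insert ha]
      have hR : MeasurableSet (⋃ k ∈ s, A k) :=
        MeasurableSet.biUnion s.countable_toSet (fun k hk => hmeas k (Finset.mem_insert_of_mem hk))
      have hint : μ (A a ∩ ⋃ k ∈ s, A k) = 0 := by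
        rw [Set.inter_iUnion₂]
        refine le_antisymm ?_ zero_le
        calc μ (⋃ k ∈ s, A a ∩ A k) ≤ ∑ k ∈ s, μ (A a ∩ A k) := measure_biUnion_finset_le s _
          _ = 0 := Finset.sum_eq_zero fun k hk =>
              hnull a (Finset.mem_insert_self a s) k (Finset.mem_insert_of_mem hk)
                (fun h => ha (h ▸ hk))
        
      have := measure_union_add_inter (μ := μ) (A a) hR
      rw [hint, add_zero] at this
      rw [this, ih (fun k hk => hmeas k (Finset.mem_insert_of_mem hk))
        (fun k hk l hl => hnull k (Finset.mem_insert_of_mem hk) l (Finset.mem_insert_of_mem hl))]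

end GIFS

section EuclidAux

open ENNReal

variable {d N : ℕ} {G : GIFS (EuclideanSpace ℝ (Fin d)) N}
  {E : Fin N → Set (EuclideanSpace ℝ (Fin d))} {δ : ℝ} {h : Fin N → ℝ} {i : Fin N}
  {P : Measure (G.InfPath i)}

/-- P of a cylinder, as stated via `hP`. -/
lemma P_cyl (hP : ∀ γ : List G.Edge, G.IsPathFrom i γ →
      P {ω : G.InfPath i | prefixList ω.1 γ.length = γ}
        = ENNReal.ofReal (h i * (γ.map fun e => h (G.tgt e) * G.r e ^ δ / h (G.src e)).prod))
    {γ : List G.Edge} (hγ : G.IsPathFrom i γ) :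
    P (G.cyl i γ)
      = ENNReal.ofReal (h i * (γ.map fun e => h (G.tgt e) * G.r e ^ δ / h (G.src e)).prod) :=
  hP γ hγ

open Classical in
/-- The fundamental sum identity at every vertex reachable from `i`. -/
lemma sum_identity (hpos : ∀ j, 0 < h j)
    (hP : ∀ γ : List G.Edge, G.IsPathFrom i γ →
      P {ω : G.InfPath i | prefixList ω.1 γ.length = γ}
        = ENNReal.ofReal (h i * (γ.map fun e => h (G.tgt e) * G.r e ^ δ / h (G.src e)).prod))
    {γ : List G.Edge} (hγ : G.IsPathFrom i γ) :
    ∑ e ∈ Finset.univ.filter (fun e => G.src e = G.pathTgt i γ), h (G.tgt e) * G.r e ^ δ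
      = h (G.pathTgt i γ) := by
  set j := G.pathTgt i γ with hj
  set c := h i * (γ.map fun e => h (G.tgt e) * G.r e ^ δ / h (G.src e)).prod with hc
  have hcpos : 0 < c := mul_pos (hpos i) (G.prodp_pos h hpos γ)
  set S := Finset.univ.filter (fun e : G.Edge => G.src e = j) with hS
  have hsplit : P (G.cyl i γ) = ∑ e ∈ S, P (G.cyl i (γ ++ [e])) := by
    rw [G.cyl_eq_iUnion (i := i) (γ := γ)]
    have hset : (⋃ e ∈ {e : G.Edge | G.src e = j}, G.cyl i (γ ++ [e]))
        = ⋃ e ∈ S, G.cyl i (γ ++ [e]) := by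
      apply Set.iUnion_congr; intro e
      simp [hS]
    rw [hset]
    apply measure_biUnion_finset
    · intro e he f hf hef
      apply G.cyl_disjoint (by simp) 
      intro hcon
      exact hef (by simpa using List.append_inj_right hcon rfl)
    · intro e _
      exact G.measurableSet_cyl i (γ ++ [e])
  have hval : ∀ e ∈ S, P (G.cyl i (γ ++ [e]))
      = ENNReal.ofReal (c * (h (G.tgt e) * G.r e ^ δ / h j)) := by
    intro e he
    have hse : G.src e = j := by simpa [hS] using he
    rw [P_cyl hP (G.isPathFrom_concat hγ (by rw [hse]))]
    congr 1
    rw [List.map_append, List.prod_append]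
    simp [hc, hse, mul_assoc]
  have hterm : ∀ e : G.Edge, 0 ≤ c * (h (G.tgt e) * G.r e ^ δ / h j) := fun e =>
    mul_nonneg hcpos.le (div_nonneg
      (mul_nonneg (hpos _).le (Real.rpow_pos_of_pos (G.r_pos e) δ).le) (hpos _).le)
  have hreal : c = ∑ e ∈ S, c * (h (G.tgt e) * G.r e ^ δ / h j) := by
    have h1 : ENNReal.ofReal c = ∑ e ∈ S, ENNReal.ofReal (c * (h (G.tgt e) * G.r e ^ δ / h j)) := by
      rw [← Finset.sum_congr rfl hval, ← hsplit, P_cyl hP hγ]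
    rw [← ENNReal.ofReal_sum_of_nonneg (fun e _ => hterm e)] at h1
    exact (ENNReal.ofReal_eq_ofReal_iff hcpos.le (Finset.sum_nonneg fun e _ => hterm e)).1 h1
  have h3 : c * ((∑ e ∈ S, h (G.tgt e) * G.r e ^ δ) / h j)
      = ∑ e ∈ S, c * (h (G.tgt e) * G.r e ^ δ / h j) := by
    rw [Finset.sum_div, Finset.mul_sum]
  have h2 : (∑ e ∈ S, h (G.tgt e) * G.r e ^ δ) / h j = 1 :=
    (mul_left_cancel₀ hcpos.ne' (by rw [mul_one]; exact (h3.trans hreal.symm).symm)).symm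
  exact (div_eq_one_iff_eq (hpos j).ne').1 h2

end EuclidAux

end Aux6
section Aux7

open ENNReal

variable {d N : ℕ} {G : GIFS (EuclideanSpace ℝ (Fin d)) N}
  {E : Fin N → Set (EuclideanSpace ℝ (Fin d))} {δ : ℝ} {h : Fin N → ℝ} {i : Fin N}
  {P : Measure (G.InfPath i)}

open Classical in
lemma edge_overlap_null (hE : G.IsInvariant E) (hδ : 0 < δ)
    (hfin : ∀ j, 0 < μH[δ] (E j) ∧ μH[δ] (E j) < ⊤)
    (hh : ∀ j, h j = (μH[δ] (E j)).toReal)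
    (hP : ∀ γ : List G.Edge, G.IsPathFrom i γ →
      P {ω : G.InfPath i | prefixList ω.1 γ.length = γ}
        = ENNReal.ofReal (h i * (γ.map fun e => h (G.tgt e) * G.r e ^ δ / h (G.src e)).prod))
    {γ : List G.Edge} (hγ : G.IsPathFrom i γ)
    {e f : G.Edge} (hef : e ≠ f) (hse : G.src e = G.pathTgt i γ)
    (hsf : G.src f = G.pathTgt i γ) :
    μH[δ] ((G.g e '' E (G.tgt e)) ∩ (G.g f '' E (G.tgt f))) = 0 := by
  have hpos : ∀ j, 0 < h j := fun j => by
    rw [hh]; exact ENNReal.toReal_pos (hfin j).1.ne' (hfin j).2.ne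
  have hEj : ∀ j, μH[δ] (E j) = ENNReal.ofReal (h j) := fun j => by
    rw [hh, ENNReal.ofReal_toReal (hfin j).2.ne]
  set j := G.pathTgt i γ with hjdef
  set A : G.Edge → Set (EuclideanSpace ℝ (Fin d)) := fun e => G.g e '' E (G.tgt e) with hA
  have hmeas : ∀ e, MeasurableSet (A e) := fun e =>
    ((hE.2.1 (G.tgt e)).image (G.g_continuous e)).measurableSet
  have hμA : ∀ e : G.Edge, μH[δ] (A e) = ENNReal.ofReal (h (G.tgt e) * G.r e ^ δ) := by
    intro e
    rw [hA]
    rw [hausdorff_image_sim (G.g e) (G.r_pos e) (G.g_sim e) hδ.le, hEj,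
      ENNReal.ofReal_rpow_of_pos (G.r_pos e),
      ← ENNReal.ofReal_mul (Real.rpow_nonneg (G.r_pos e).le δ), mul_comm]
  set S := Finset.univ.filter (fun e : G.Edge => G.src e = j) with hS
  have heS : e ∈ S := by simp [hS, hse]
  have hfS : f ∈ S := by simp [hS, hsf]
  have hsum : ∑ e' ∈ S, h (G.tgt e') * G.r e' ^ δ = h j := sum_identity hpos hP hγ
  have hcover : E j = ⋃ e' ∈ S, A e' := by
    rw [hE.2.2 j]
    apply Set.iUnion_congr; intro e'
    simp [hS, hA]
  have htot : μH[δ] (⋃ e' ∈ S, A e') = ∑ e' ∈ S, μH[δ] (A e') := by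
    rw [← hcover, hEj j, ← hsum,
      ENNReal.ofReal_sum_of_nonneg (fun e' _ => mul_nonneg (hpos _).le
        (Real.rpow_pos_of_pos (G.r_pos e') δ).le)]
    exact Finset.sum_congr rfl fun e' _ => (hμA e').symm
  set T := (S.erase e).erase f with hT
  have hfT : f ∈ S.erase e := Finset.mem_erase.2 ⟨fun hc => hef hc.symm, hfS⟩
  have hsplit : ∑ e' ∈ S, μH[δ] (A e')
      = μH[δ] (A e) + μH[δ] (A f) + ∑ e' ∈ T, μH[δ] (A e') := by
    rw [← Finset.add_sum_erase S _ heS, ← Finset.add_sum_erase (S.erase e) _ hfT, hT, add_assoc]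
  have hsub : (⋃ e' ∈ S, A e') ⊆ (A e ∪ A f) ∪ ⋃ e' ∈ T, A e' := by
    intro x hx
    obtain ⟨e', he', hxe⟩ := Set.mem_iUnion₂.1 hx
    by_cases h1 : e' = e
    · exact Or.inl (Or.inl (h1 ▸ hxe))
    by_cases h2 : e' = f
    · exact Or.inl (Or.inr (h2 ▸ hxe))
    · exact Or.inr (Set.mem_iUnion₂.2 ⟨e', Finset.mem_erase.2 ⟨h2, Finset.mem_erase.2 ⟨h1, he'⟩⟩, hxe⟩)
  have hkey : μH[δ] (A e) + μH[δ] (A f) + ∑ e' ∈ T, μH[δ] (A e') + μH[δ] (A e ∩ A f)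
      ≤ μH[δ] (A e) + μH[δ] (A f) + ∑ e' ∈ T, μH[δ] (A e') := by
    calc μH[δ] (A e) + μH[δ] (A f) + ∑ e' ∈ T, μH[δ] (A e') + μH[δ] (A e ∩ A f)
        = ∑ e' ∈ S, μH[δ] (A e') + μH[δ] (A e ∩ A f) := by rw [hsplit]
      _ = μH[δ] (⋃ e' ∈ S, A e') + μH[δ] (A e ∩ A f) := by rw [htot]
      _ ≤ (μH[δ] (A e ∪ A f) + ∑ e' ∈ T, μH[δ] (A e')) + μH[δ] (A e ∩ A f) := by
          gcongr
          calc μH[δ] (⋃ e' ∈ S, A e') ≤ μH[δ] ((A e ∪ A f) ∪ ⋃ e' ∈ T, A e') :=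
                measure_mono hsub
            _ ≤ μH[δ] (A e ∪ A f) + μH[δ] (⋃ e' ∈ T, A e') := measure_union_le _ _
            _ ≤ μH[δ] (A e ∪ A f) + ∑ e' ∈ T, μH[δ] (A e') := by
                gcongr
                exact measure_biUnion_finset_le T A
      _ = (μH[δ] (A e ∪ A f) + μH[δ] (A e ∩ A f)) + ∑ e' ∈ T, μH[δ] (A e') := by ring
      _ = (μH[δ] (A e) + μH[δ] (A f)) + ∑ e' ∈ T, μH[δ] (A e') := by
          rw [measure_union_add_inter (A e) (hmeas f)]
      _ = μH[δ] (A e) + μH[δ] (A f) + ∑ e' ∈ T, μH[δ] (A e') := by ring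
  have hfin' : μH[δ] (A e) + μH[δ] (A f) + ∑ e' ∈ T, μH[δ] (A e') ≠ ⊤ := by
    rw [← hsplit, ← htot, ← hcover, hEj j]
    exact ENNReal.ofReal_ne_top
  have := (ENNReal.add_le_add_iff_left hfin').1 (by
    calc μH[δ] (A e) + μH[δ] (A f) + ∑ e' ∈ T, μH[δ] (A e') + μH[δ] (A e ∩ A f)
        ≤ μH[δ] (A e) + μH[δ] (A f) + ∑ e' ∈ T, μH[δ] (A e') + 0 := by
          rw [add_zero]; exact hkey)
  exact le_antisymm this zero_le

lemma pathSet_overlap_null (hE : G.IsInvariant E) (hδ : 0 < δ)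
    (hfin : ∀ j, 0 < μH[δ] (E j) ∧ μH[δ] (E j) < ⊤)
    (hh : ∀ j, h j = (μH[δ] (E j)).toReal)
    (hP : ∀ γ : List G.Edge, G.IsPathFrom i γ →
      P {ω : G.InfPath i | prefixList ω.1 γ.length = γ}
        = ENNReal.ofReal (h i * (γ.map fun e => h (G.tgt e) * G.r e ^ δ / h (G.src e)).prod)) :
    ∀ (γ' γ'' η : List G.Edge), G.IsPathFrom i η →
      G.IsPathFrom (G.pathTgt i η) γ' → G.IsPathFrom (G.pathTgt i η) γ'' →
      γ'.length = γ''.length → γ' ≠ γ'' →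
      μH[δ] (G.pathSet E (G.pathTgt i η) γ' ∩ G.pathSet E (G.pathTgt i η) γ'') = 0 := by
  intro γ'
  induction γ' with
  | nil =>
      intro γ'' η hη h1 h2 hlen hne
      cases γ'' with
      | nil => exact absurd rfl hne
      | cons f b => simp at hlen
  | cons e a ih =>
      intro γ'' η hη h1 h2 hlen hne
      cases γ'' with
      | nil => simp at hlen
      | cons f b =>
          rw [G.isPathFrom_cons] at h1 h2
          by_cases hef : e = f
          · subst hef
            have hab : a ≠ b := fun hc => hne (by rw [hc])
            have hlen' : a.length = b.length := by simpa using hlen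
            have hηe : G.IsPathFrom i (η ++ [e]) := G.isPathFrom_concat hη h1.1
            have htgt : G.pathTgt i (η ++ [e]) = G.tgt e := G.pathTgt_concat i η e
            have hIH := ih b (η ++ [e]) hηe (htgt ▸ h1.2) (htgt ▸ h2.2) hlen' hab
            rw [htgt] at hIH
            rw [G.pathSet_cons, G.pathSet_cons,
              ← Set.image_inter (G.g_injective e),
              hausdorff_image_sim (G.g e) (G.r_pos e) (G.g_sim e) hδ.le, hIH, mul_zero]
          · have hsub1 : G.pathSet E (G.pathTgt i η) (e :: a) ⊆ G.g e '' E (G.tgt e) := by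
              rw [G.pathSet_cons]
              exact Set.image_mono (G.pathSet_subset_root hE h1.2)
            have hsub2 : G.pathSet E (G.pathTgt i η) (f :: b) ⊆ G.g f '' E (G.tgt f) := by
              rw [G.pathSet_cons]
              exact Set.image_mono (G.pathSet_subset_root hE h2.2)
            have h0 := edge_overlap_null hE hδ hfin hh hP hη hef h1.1 h2.1
            refine le_antisymm ?_ zero_le
            calc μH[δ] (G.pathSet E (G.pathTgt i η) (e :: a) ∩ G.pathSet E (G.pathTgt i η) (f :: b))
                ≤ μH[δ] ((G.g e '' E (G.tgt e)) ∩ (G.g f '' E (G.tgt f))) :=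
                  measure_mono (Set.inter_subset_inter hsub1 hsub2)
              _ = 0 := h0

end Aux7

/-- **Theorem 8.2.** For a GIFS with the open set condition and
`0 < h_i = H^δ(E_i) < ∞`, the restricted Hausdorff measure `μ_i = H^δ|_{E_i}` is the
push-forward of the Markov measure `P_i` under the projection `π_i`. -/
theorem hausdorff_eq_markov_pushforward {d N : ℕ} (G : GIFS (EuclideanSpace ℝ (Fin d)) N)
    (E : Fin N → Set (EuclideanSpace ℝ (Fin d))) (hE : G.IsInvariant E)
    (hosc : G.OSC) (δ : ℝ) (hδ : G.IsSimDim δ)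
    (hfin : ∀ j, 0 < μH[δ] (E j) ∧ μH[δ] (E j) < ⊤)
    (h : Fin N → ℝ) (hh : ∀ j, h j = (μH[δ] (E j)).toReal) (i : Fin N)
    (P : Measure (G.InfPath i))
    (hP : ∀ γ : List G.Edge, G.IsPathFrom i γ →
        P {ω : G.InfPath i | prefixList ω.1 γ.length = γ}
          = ENNReal.ofReal (h i *
              (γ.map fun e => h (G.tgt e) * G.r e ^ δ / h (G.src e)).prod))
    (π : G.InfPath i → EuclideanSpace ℝ (Fin d)) (hπ : G.IsCoding E i π) :
    ∀ B : Set (EuclideanSpace ℝ (Fin d)), MeasurableSet B → μH[δ] (B ∩ E i) = P (π ⁻¹' B) := by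
  classical
  intro B hB
  obtain ⟨hδpos, -⟩ := hδ
  have hpos : ∀ j, 0 < h j := fun j => by
    rw [hh]; exact ENNReal.toReal_pos (hfin j).1.ne' (hfin j).2.ne
  have hEj : ∀ j, μH[δ] (E j) = ENNReal.ofReal (h j) := fun j => by
    rw [hh, ENNReal.ofReal_toReal (hfin j).2.ne]
  have hEcomp : ∀ j, IsCompact (E j) := hE.2.1
  have hEmeas : ∀ j, MeasurableSet (E j) := fun j => (hEcomp j).measurableSet
  set μ' := (μH[δ]).restrict (E i) with hμ'def
  haveI : IsFiniteMeasure μ' := ⟨by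
    rw [hμ'def, Measure.restrict_apply_univ]; exact (hfin i).2⟩
  have hμ'app : ∀ S : Set (EuclideanSpace ℝ (Fin d)), MeasurableSet S →
      μ' S = μH[δ] (S ∩ E i) := fun S hS => Measure.restrict_apply hS
  have htotP : P Set.univ = ENNReal.ofReal (h i) := by
    have h1 := hP [] (G.isPathFrom_nil i)
    have h0 : {ω : G.InfPath i | prefixList ω.1 ([] : List G.Edge).length = []} = Set.univ := by
      ext ω; simp [prefixList_zero]
    rw [h0] at h1
    simpa using h1
  -- the edge set is nonempty
  have hEdge : Nonempty G.Edge := by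
    by_contra hc
    rw [not_nonempty_iff] at hc
    obtain ⟨x, hx⟩ := hE.1 i
    have h1 : E i = ∅ := by
      rw [hE.2.2 i]
      ext y; simp
    rw [h1] at hx
    exact hx
  haveI : Nonempty (Fin N) := ⟨i⟩
  set ρ : ℝ := Finset.univ.sup' Finset.univ_nonempty G.r with hρdef
  obtain ⟨e₀, -, hρeq⟩ := Finset.exists_mem_eq_sup' (Finset.univ_nonempty) G.r
  have hρpos : 0 < ρ := by rw [hρdef, hρeq]; exact G.r_pos e₀
  have hρlt : ρ < 1 := by rw [hρdef, hρeq]; exact G.r_lt_one e₀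
  have hρle : ∀ e, G.r e ≤ ρ := fun e => Finset.le_sup' G.r (Finset.mem_univ e)
  set D : ℝ := Finset.univ.sup' Finset.univ_nonempty (fun j => Metric.diam (E j)) with hDdef
  have hDle : ∀ j, Metric.diam (E j) ≤ D := fun j => by
    rw [hDdef]; exact Finset.le_sup' (fun j => Metric.diam (E j)) (Finset.mem_univ j)
  have hDnn : 0 ≤ D := le_trans Metric.diam_nonneg (hDle i)
  have hrprod : ∀ γ : List G.Edge, (γ.map G.r).prod ≤ ρ ^ γ.length := by
    intro γ
    induction γ with
    | nil => simp
    | cons e γ ih =>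
        rw [List.map_cons, List.prod_cons, List.length_cons]
        calc G.r e * (γ.map G.r).prod ≤ ρ * ρ ^ γ.length :=
              mul_le_mul (hρle e) ih (G.rprod_pos γ).le hρpos.le
          _ = ρ ^ (γ.length + 1) := by ring
  have hdistb : ∀ (ω : G.InfPath i) (n : ℕ) (x : EuclideanSpace ℝ (Fin d)),
      x ∈ G.pathSet E i (prefixList ω.1 n) → dist x (π ω) ≤ ρ ^ n * D := by
    intro ω n x hx
    obtain ⟨a, ha, rfl⟩ := hx
    obtain ⟨b, hb, hπeq⟩ := hπ ω n
    rw [← hπeq, G.pathMap_dist]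
    have h1 : dist a b ≤ Metric.diam (E (G.pathTgt i (prefixList ω.1 n))) :=
      Metric.dist_le_diam_of_mem (hEcomp _).isBounded ha hb
    apply mul_le_mul _ (h1.trans (hDle _)) dist_nonneg (pow_nonneg hρpos.le n)
    have h2 := hrprod (prefixList ω.1 n)
    rwa [prefixList_length] at h2
  -- Step 1: for open sets, `P (π ⁻¹' U) ≤ μH (U ∩ E i)`.
  have keyA : ∀ U : Set (EuclideanSpace ℝ (Fin d)), IsOpen U →
      P (π ⁻¹' U) ≤ μH[δ] (U ∩ E i) := by
    intro U hU
    set V : ℕ → Set (G.InfPath i) := fun n => {ω | G.pathSet E i (prefixList ω.1 n) ⊆ U} with hV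
    have hVn : ∀ n : ℕ, V n = ⋃ v ∈ Finset.univ.filter (fun v : Fin n → G.Edge =>
        G.IsPathFrom i (List.ofFn v) ∧ G.pathSet E i (List.ofFn v) ⊆ U),
        G.cyl i (List.ofFn v) := by
      intro n
      ext ω
      simp only [hV, Set.mem_setOf_eq, Set.mem_iUnion, Finset.mem_filter, Finset.mem_univ,
        true_and, exists_prop]
      constructor
      · intro hsub
        refine ⟨fun k => ω.1 k, ⟨G.prefix_isPathFrom ω n, hsub⟩, ?_⟩
        show prefixList ω.1 (List.ofFn fun k : Fin n => ω.1 k).length = _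
        rw [show (List.ofFn fun k : Fin n => ω.1 k).length = n from by simp]
        rfl
      · rintro ⟨v, ⟨-, hvU⟩, hvcyl⟩
        have : prefixList ω.1 n = List.ofFn v := by
          have hl : (List.ofFn v).length = n := by simp
          have := hvcyl
          rwa [show (G.cyl i (List.ofFn v)) = {ω' : G.InfPath i |
            prefixList ω'.1 n = List.ofFn v} from by rw [GIFS.cyl, hl]] at this
        rw [this]; exact hvU
    have hVP : ∀ n, P (V n) ≤ μH[δ] (U ∩ E i) := by
      intro n
      rw [hVn n]
      set T := Finset.univ.filter (fun v : Fin n → G.Edge =>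
        G.IsPathFrom i (List.ofFn v) ∧ G.pathSet E i (List.ofFn v) ⊆ U) with hT
      have h1 : P (⋃ v ∈ T, G.cyl i (List.ofFn v)) = ∑ v ∈ T, P (G.cyl i (List.ofFn v)) := by
        apply measure_biUnion_finset
        · intro v hv w hw hvw
          exact G.cyl_disjoint (by simp) (fun hc => hvw (List.ofFn_inj.1 hc))
        · exact fun v _ => G.measurableSet_cyl i _
      have h2 : ∀ v ∈ T, P (G.cyl i (List.ofFn v)) = μH[δ] (G.pathSet E i (List.ofFn v)) := by
        intro v hv
        rw [hT, Finset.mem_filter] at hv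
        rw [P_cyl hP hv.2.1, G.measure_pathSet_eq E hδpos hfin h hh hv.2.1]
      have h3 : μH[δ] (⋃ v ∈ T, G.pathSet E i (List.ofFn v))
          = ∑ v ∈ T, μH[δ] (G.pathSet E i (List.ofFn v)) := by
        apply GIFS.measure_biUnion_null_inter
        · exact fun v _ => ((hEcomp _).image (G.pathMap_continuous _)).measurableSet
        · intro v hv w hw hvw
          rw [hT, Finset.mem_filter] at hv hw
          have := pathSet_overlap_null hE hδpos hfin hh hP (List.ofFn v) (List.ofFn w) []
            (G.isPathFrom_nil i) hv.2.1 hw.2.1 (by simp) (fun hc => hvw (List.ofFn_inj.1 hc))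
          exact this
      have h4 : (⋃ v ∈ T, G.pathSet E i (List.ofFn v)) ⊆ U ∩ E i := by
        intro x hx
        obtain ⟨v, hv, hxv⟩ := Set.mem_iUnion₂.1 hx
        rw [hT, Finset.mem_filter] at hv
        exact ⟨hv.2.2 hxv, G.pathSet_subset_root hE hv.2.1 hxv⟩
      calc P (⋃ v ∈ T, G.cyl i (List.ofFn v)) = ∑ v ∈ T, P (G.cyl i (List.ofFn v)) := h1
        _ = ∑ v ∈ T, μH[δ] (G.pathSet E i (List.ofFn v)) := Finset.sum_congr rfl h2
        _ = μH[δ] (⋃ v ∈ T, G.pathSet E i (List.ofFn v)) := h3.symm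
        _ ≤ μH[δ] (U ∩ E i) := measure_mono h4
    have hVmono : Monotone V := by
      apply monotone_nat_of_le_succ
      intro n ω hω
      exact (G.prefix_pathSet_antitone hE ω n).trans hω
    have hUnion : π ⁻¹' U = ⋃ n, V n := by
      ext ω
      simp only [Set.mem_preimage, Set.mem_iUnion]
      constructor
      · intro hωU
        obtain ⟨ε, hε, hball⟩ := Metric.isOpen_iff.1 hU (π ω) hωU
        have htend : Filter.Tendsto (fun n => ρ ^ n * D) Filter.atTop (nhds 0) := by
          simpa using (tendsto_pow_atTop_nhds_zero_of_lt_one hρpos.le hρlt).mul_const D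
        obtain ⟨n, hn⟩ := (htend.eventually (gt_mem_nhds hε)).exists
        refine ⟨n, fun x hx => hball ?_⟩
        rw [Metric.mem_ball]
        exact lt_of_le_of_lt (hdistb ω n x hx) hn
      · rintro ⟨n, hn⟩
        exact hn (hπ ω n)
    rw [hUnion, Directed.measure_iUnion hVmono.directed_le]
    exact iSup_le hVP
  -- Step 2: for closed sets, `P (π ⁻¹' C) ≤ μH (C ∩ E i)`.
  have keyB : ∀ C : Set (EuclideanSpace ℝ (Fin d)), IsClosed C →
      P (π ⁻¹' C) ≤ μH[δ] (C ∩ E i) := by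
    intro C hC
    have hth := tendsto_measure_thickening_of_isClosed (μ := μ')
      ⟨1, one_pos, measure_ne_top μ' _⟩ hC
    have hev : ∀ᶠ ε in nhdsWithin 0 (Set.Ioi (0:ℝ)),
        P (π ⁻¹' C) ≤ μ' (Metric.thickening ε C) := by
      filter_upwards [self_mem_nhdsWithin] with ε hε
      calc P (π ⁻¹' C) ≤ P (π ⁻¹' Metric.thickening ε C) :=
            measure_mono (Set.preimage_mono (Metric.self_subset_thickening hε C))
        _ ≤ μH[δ] (Metric.thickening ε C ∩ E i) := keyA _ Metric.isOpen_thickening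
        _ = μ' (Metric.thickening ε C) :=
            (hμ'app _ Metric.isOpen_thickening.measurableSet).symm
    calc P (π ⁻¹' C) ≤ μ' C := ge_of_tendsto hth hev
      _ = μH[δ] (C ∩ E i) := hμ'app C hC.measurableSet
  -- Step 3: the reverse inequality from the complement.
  have hcompl : ∀ S : Set (EuclideanSpace ℝ (Fin d)), MeasurableSet S →
      P (π ⁻¹' Sᶜ) ≤ μH[δ] (Sᶜ ∩ E i) → μH[δ] (S ∩ E i) ≤ P (π ⁻¹' S) := by
    intro S hS hcS
    have h1 : μH[δ] (S ∩ E i) + μH[δ] (Sᶜ ∩ E i) = ENNReal.ofReal (h i) := by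
      have hd := measure_inter_add_diff (μ := μH[δ]) (E i) hS
      rw [Set.inter_comm (E i) S] at hd
      rw [show E i \ S = Sᶜ ∩ E i from by rw [Set.diff_eq_compl_inter]] at hd
      rw [hd, hEj i]
    have h2 : μH[δ] (S ∩ E i) + μH[δ] (Sᶜ ∩ E i) ≤ P (π ⁻¹' S) + μH[δ] (Sᶜ ∩ E i) := by
      rw [h1]
      calc ENNReal.ofReal (h i) = P Set.univ := htotP.symm
        _ = P ((π ⁻¹' S) ∪ (π ⁻¹' Sᶜ)) := by
            rw [← Set.preimage_union, Set.union_compl_self, Set.preimage_univ]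
        _ ≤ P (π ⁻¹' S) + P (π ⁻¹' Sᶜ) := measure_union_le _ _
        _ ≤ P (π ⁻¹' S) + μH[δ] (Sᶜ ∩ E i) := by gcongr
    have hfin3 : μH[δ] (Sᶜ ∩ E i) ≠ ⊤ :=
      (lt_of_le_of_lt (measure_mono Set.inter_subset_right) (hfin i).2).ne
    exact (ENNReal.add_le_add_iff_right hfin3).1 h2
  have keyCopen : ∀ U : Set (EuclideanSpace ℝ (Fin d)), IsOpen U →
      P (π ⁻¹' U) = μH[δ] (U ∩ E i) := fun U hU =>
    le_antisymm (keyA U hU) (hcompl U hU.measurableSet (keyB Uᶜ hU.isClosed_compl))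
  have keyCclosed : ∀ C : Set (EuclideanSpace ℝ (Fin d)), IsClosed C →
      P (π ⁻¹' C) = μH[δ] (C ∩ E i) := fun C hC =>
    le_antisymm (keyB C hC) (hcompl C hC.measurableSet (keyA Cᶜ hC.isOpen_compl))
  -- Step 4: general measurable sets, by regularity.
  refine le_antisymm ?_ ?_
  · apply ENNReal.le_of_forall_pos_le_add
    intro ε hε hfin2
    obtain ⟨C, hCB, hCc, hlt⟩ := hB.exists_isClosed_lt_add (μ := μ')
      (measure_ne_top μ' B) (ε := (ε : ENNReal)) (by exact_mod_cast hε.ne')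
    calc μH[δ] (B ∩ E i) = μ' B := (hμ'app B hB).symm
      _ ≤ μ' C + ε := hlt.le
      _ = μH[δ] (C ∩ E i) + ε := by rw [hμ'app C hCc.measurableSet]
      _ = P (π ⁻¹' C) + ε := by rw [keyCclosed C hCc]
      _ ≤ P (π ⁻¹' B) + ε :=
          add_le_add_left (measure_mono (Set.preimage_mono hCB)) _
  · apply ENNReal.le_of_forall_pos_le_add
    intro ε hε hfin2
    obtain ⟨U, hBU, hUo, hU⟩ := Set.exists_isOpen_lt_add B (μ := μ')
      (measure_ne_top μ' B) (ε := (ε : ENNReal)) (by exact_mod_cast hε.ne')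
    calc P (π ⁻¹' B) ≤ P (π ⁻¹' U) := measure_mono (Set.preimage_mono hBU)
      _ = μH[δ] (U ∩ E i) := keyCopen U hUo
      _ = μ' U := (hμ'app U hUo.measurableSet).symm
      _ ≤ μ' B + ε := hU.le
      _ = μH[δ] (B ∩ E i) + ε := by rw [hμ'app B hB]
end
end

section
/- Let (A,Γ,G,≺) be a linear GIFS on ℝ^d with open set condition and 0 < h_i := H^δ(E_i) < ∞ for all i, let G* be its measure-recording GIFS, and let π_i : Γ_i^∞ → E_i and ρ_i : Γ_i^∞ → F_i = [0,h_i] be the projections of G and G* respectively. If x ∈ F_i has two ρ_i-codings ω, γ ∈ Γ_i^∞ (i.e. ρ_i(ω) = ρ_i(γ) = x), then π_i(ω) = π_i(γ). Consequently ψ_i := π_i ∘ ρ_i^{−1} is a well-defined map from F_i to E_i. -/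
open MeasureTheory Set

noncomputable section
namespace Lem82

open OGIFS GIFS

variable {X : Type} [MetricSpace X] {N : ℕ}

lemma isPathFrom_nil (G : GIFS X N) (i : Fin N) : G.IsPathFrom i [] :=
  ⟨List.isChain_nil, by simp⟩

lemma isPathFrom_cons {G : GIFS X N} {i : Fin N} {e : G.Edge} {l : List G.Edge}
    (h : G.IsPathFrom i (e :: l)) : G.src e = i ∧ G.IsPathFrom (G.tgt e) l := by
  obtain ⟨hc, hhd⟩ := h
  refine ⟨hhd e rfl, hc.tail, ?_⟩
  intro f hf
  cases l with
  | nil => simp at hf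
  | cons a l' =>
    simp only [List.head?, Option.mem_def, Option.some.injEq] at hf
    subst hf
    exact ((List.isChain_cons_cons).mp hc).1.symm

lemma pathTgt_cons (G : GIFS X N) (i : Fin N) (e : G.Edge) (l : List G.Edge) :
    G.pathTgt i (e :: l) = G.pathTgt (G.tgt e) l := by
  cases l with
  | nil => rfl
  | cons a l' =>
    obtain ⟨x, hx⟩ : ∃ x, (a :: l').getLast? = some x :=
      ⟨_, List.getLast?_eq_getLast (by simp)⟩
    simp [GIFS.pathTgt, List.getLast?_cons_cons, hx]

lemma isPathFrom_append (G : GIFS X N) {i j : Fin N} {l₁ l₂ : List G.Edge}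
    (h1 : G.IsPathFrom i l₁) (ht : G.pathTgt i l₁ = j) (h2 : G.IsPathFrom j l₂) :
    G.IsPathFrom i (l₁ ++ l₂) ∧ G.pathTgt i (l₁ ++ l₂) = G.pathTgt j l₂ := by
  cases l₂ with
  | nil => simpa using ⟨h1, ht⟩
  | cons b m =>
    have hsrcb : G.src b = j := h2.2 b rfl
    constructor
    · constructor
      · refine (List.isChain_append).mpr ⟨h1.1, h2.1, ?_⟩
        intro x hx y hy
        simp only [List.head?, Option.mem_def, Option.some.injEq] at hy
        subst hy
        rw [Option.mem_def] at hx
        have : G.pathTgt i l₁ = G.tgt x := by simp [GIFS.pathTgt, hx]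
        rw [this] at ht
        rw [ht, hsrcb]
      · intro f hf
        cases l₁ with
        | nil =>
          simp only [List.nil_append, List.head?, Option.mem_def, Option.some.injEq] at hf
          subst hf
          have : i = j := by simpa [GIFS.pathTgt] using ht
          rw [hsrcb, this]
        | cons a l' =>
          simp only [List.cons_append, List.head?, Option.mem_def, Option.some.injEq] at hf
          subst hf
          exact h1.2 _ rfl
    · have hgl : (l₁ ++ b :: m).getLast? = (b :: m).getLast? :=
        List.getLast?_append_of_ne_nil _ (by simp)
      obtain ⟨x, hx⟩ : ∃ x, (b :: m).getLast? = some x :=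
        ⟨_, List.getLast?_eq_getLast (by simp)⟩
      simp [GIFS.pathTgt, hgl, hx]

/-- Reachability from `i`. -/
def Reach (G : GIFS X N) (i j : Fin N) : Prop :=
  ∃ σ : List G.Edge, G.IsPathFrom i σ ∧ G.pathTgt i σ = j

lemma reach_self (G : GIFS X N) (i : Fin N) : Reach G i i :=
  ⟨[], isPathFrom_nil G i, rfl⟩

lemma reach_step {G : GIFS X N} {i j : Fin N} (hr : Reach G i j) {e : G.Edge}
    (he : G.src e = j) : Reach G i (G.tgt e) := by
  obtain ⟨σ, hσ, hσt⟩ := hr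
  have h2 : G.IsPathFrom j [e] := ⟨List.isChain_singleton e, by simpa using he⟩
  obtain ⟨hp, hpt⟩ := isPathFrom_append G hσ hσt h2
  exact ⟨σ ++ [e], hp, by simpa [GIFS.pathTgt] using hpt⟩

lemma prefixList_zero {α : Type} (ω : ℕ → α) : prefixList ω 0 = [] := by
  simp [prefixList]

lemma prefixList_succ {α : Type} (ω : ℕ → α) (n : ℕ) :
    prefixList ω (n + 1) = prefixList ω n ++ [ω n] := by
  rw [prefixList, List.ofFn_succ', List.concat_eq_append]
  simp [prefixList, Fin.coe_castSucc, Fin.val_last]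

lemma prefixList_length {α : Type} (ω : ℕ → α) (n : ℕ) : (prefixList ω n).length = n := by
  simp [prefixList]

lemma isPathFrom_prefix {G : GIFS X N} {i : Fin N} (ω : G.InfPath i) (n : ℕ) :
    G.IsPathFrom i (prefixList ω.1 n) := by
  constructor
  · refine List.isChain_iff_getElem.mpr ?_
    intro k hk
    simp only [prefixList, List.length_ofFn] at hk
    simp only [prefixList, List.getElem_ofFn]
    exact ω.2.2 k
  · intro f hf
    cases n with
    | zero => simp [prefixList] at hf
    | succ m =>
      have : (prefixList ω.1 (m+1)).head? = some (ω.1 0) := by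
        simp [prefixList, List.ofFn_succ]
      rw [this] at hf
      simp only [Option.mem_def, Option.some.injEq] at hf
      subst hf
      exact ω.2.1

lemma pathTgt_prefix {G : GIFS X N} {i : Fin N} (ω : G.InfPath i) (n : ℕ) :
    G.pathTgt i (prefixList ω.1 n) = G.src (ω.1 n) := by
  cases n with
  | zero => simpa [prefixList, GIFS.pathTgt] using ω.2.1.symm
  | succ m =>
    rw [prefixList_succ]
    simp [GIFS.pathTgt, List.getLast?_concat, (ω.2.2 m)]

end Lem82
end

noncomputable section
namespace Lem82
open OGIFS GIFS

variable {X : Type} [MetricSpace X] {N : ℕ}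

/-- Product of the `δ`-powers of ratios along a path. -/
def slope (G : OGIFS X N) (δ : ℝ) (l : List G.Edge) : ℝ :=
  (l.map fun e => G.r e ^ δ).prod

@[simp] lemma slope_nil (G : OGIFS X N) (δ : ℝ) : slope G δ [] = 1 := by simp [slope]

@[simp] lemma slope_cons (G : OGIFS X N) (δ : ℝ) (e : G.Edge) (l : List G.Edge) :
    slope G δ (e :: l) = G.r e ^ δ * slope G δ l := by simp [slope]

lemma slope_append (G : OGIFS X N) (δ : ℝ) (l₁ l₂ : List G.Edge) :
    slope G δ (l₁ ++ l₂) = slope G δ l₁ * slope G δ l₂ := by simp [slope]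

lemma rpow_pos (G : OGIFS X N) (δ : ℝ) (e : G.Edge) : 0 < G.r e ^ δ :=
  Real.rpow_pos_of_pos (G.r_pos e) δ

lemma slope_pos (G : OGIFS X N) (δ : ℝ) (l : List G.Edge) : 0 < slope G δ l := by
  induction l with
  | nil => simp
  | cons e l ih => simpa using mul_pos (rpow_pos G δ e) ih

@[simp] lemma fPathMap_nil (G : OGIFS X N) (δ : ℝ) (h : Fin N → ℝ) (x : ℝ) :
    G.fPathMap δ h [] x = x := rfl

@[simp] lemma fPathMap_cons (G : OGIFS X N) (δ : ℝ) (h : Fin N → ℝ) (e : G.Edge)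
    (l : List G.Edge) (x : ℝ) :
    G.fPathMap δ h (e :: l) x = G.fmap δ h e (G.fPathMap δ h l x) := rfl

lemma fPathMap_append (G : OGIFS X N) (δ : ℝ) (h : Fin N → ℝ) (l₁ l₂ : List G.Edge) (x : ℝ) :
    G.fPathMap δ h (l₁ ++ l₂) x = G.fPathMap δ h l₁ (G.fPathMap δ h l₂ x) := by
  induction l₁ with
  | nil => simp
  | cons e l ih => simp [ih]

lemma fPathMap_affine (G : OGIFS X N) (δ : ℝ) (h : Fin N → ℝ) (l : List G.Edge) (x : ℝ) :
    G.fPathMap δ h l x = slope G δ l * x + G.fPathMap δ h l 0 := by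
  induction l with
  | nil => simp
  | cons e l ih =>
    simp only [fPathMap_cons, slope_cons, OGIFS.fmap]
    rw [ih]
    ring

lemma fPathMap_mono (G : OGIFS X N) (δ : ℝ) (h : Fin N → ℝ) (l : List G.Edge) {x y : ℝ}
    (hxy : x ≤ y) : G.fPathMap δ h l x ≤ G.fPathMap δ h l y := by
  have hx := fPathMap_affine G δ h l x
  have hy := fPathMap_affine G δ h l y
  rw [hx, hy]
  have := mul_le_mul_of_nonneg_left hxy (slope_pos G δ l).le
  linarith

lemma fPathMap_le_iff (G : OGIFS X N) (δ : ℝ) (h : Fin N → ℝ) (l : List G.Edge) {x y : ℝ} :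
    G.fPathMap δ h l x ≤ G.fPathMap δ h l y ↔ x ≤ y := by
  have hx := fPathMap_affine G δ h l x
  have hy := fPathMap_affine G δ h l y
  rw [hx, hy]
  have hs := slope_pos G δ l
  constructor
  · intro hle
    have : slope G δ l * x ≤ slope G δ l * y := by linarith
    exact le_of_mul_le_mul_left this hs
  · intro hxy
    have := mul_le_mul_of_nonneg_left hxy hs.le
    linarith

lemma bCoef_nonneg (G : OGIFS X N) (δ : ℝ) {h : Fin N → ℝ} (hh0 : ∀ j, 0 ≤ h j) (e : G.Edge) :
    0 ≤ G.bCoef δ h e := by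
  apply Finset.sum_nonneg
  intro e' _
  by_cases hc : G.elt e' e
  · simp only [hc, if_true]
    exact mul_nonneg (hh0 _) (rpow_pos G δ e').le
  · simp [hc]

lemma fPathMap_zero_nonneg (G : OGIFS X N) (δ : ℝ) {h : Fin N → ℝ} (hh0 : ∀ j, 0 ≤ h j)
    (l : List G.Edge) : 0 ≤ G.fPathMap δ h l 0 := by
  induction l with
  | nil => simp
  | cons e l ih =>
    simp only [fPathMap_cons, OGIFS.fmap]
    have h1 : 0 ≤ G.r e ^ δ * G.fPathMap δ h l 0 := mul_nonneg (rpow_pos G δ e).le ih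
    have h2 := bCoef_nonneg G δ hh0 e
    linarith

/-- The quantity `S_j = ∑_{e ∈ Γ_j} h_{t(e)} r_e^δ`. -/
def Svert (G : OGIFS X N) (δ : ℝ) (h : Fin N → ℝ) (j : Fin N) : ℝ :=
  ∑ e : G.Edge, if G.src e = j then h (G.tgt e) * G.r e ^ δ else 0

open Classical in
lemma bCoef_add_le_of_elt (G : OGIFS X N) (δ : ℝ) {h : Fin N → ℝ} (hh0 : ∀ j, 0 ≤ h j)
    {e f : G.Edge} (hef : G.elt e f) :
    G.bCoef δ h e + h (G.tgt e) * G.r e ^ δ ≤ G.bCoef δ h f := by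
  have he : h (G.tgt e) * G.r e ^ δ
      = ∑ e' : G.Edge, if e' = e then h (G.tgt e') * G.r e' ^ δ else 0 := by
    rw [Finset.sum_ite_eq' Finset.univ e (fun e' => h (G.tgt e') * G.r e' ^ δ)]
    simp
  rw [OGIFS.bCoef, OGIFS.bCoef, he, ← Finset.sum_add_distrib]
  apply Finset.sum_le_sum
  intro e' _
  by_cases h1 : e' = e
  · subst h1
    simp [(G.elt_irrefl e'), hef]
  · by_cases h2 : G.elt e' e
    · simp [h2, h1, G.elt_trans h2 hef]
    · have : (0:ℝ) ≤ if G.elt e' f then h (G.tgt e') * G.r e' ^ δ else 0 := by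
        by_cases h3 : G.elt e' f
        · simp only [h3, if_true]
          exact mul_nonneg (hh0 _) (rpow_pos G δ e').le
        · simp [h3]
      simpa [h1, h2] using this

open Classical in
lemma bCoef_add_le_Svert (G : OGIFS X N) (δ : ℝ) {h : Fin N → ℝ} (hh0 : ∀ j, 0 ≤ h j)
    (e : G.Edge) :
    G.bCoef δ h e + h (G.tgt e) * G.r e ^ δ ≤ Svert G δ h (G.src e) := by
  have he : h (G.tgt e) * G.r e ^ δ
      = ∑ e' : G.Edge, if e' = e then h (G.tgt e') * G.r e' ^ δ else 0 := by
    rw [Finset.sum_ite_eq' Finset.univ e (fun e' => h (G.tgt e') * G.r e' ^ δ)]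
    simp
  rw [OGIFS.bCoef, Svert, he, ← Finset.sum_add_distrib]
  apply Finset.sum_le_sum
  intro e' _
  have hnn : (0:ℝ) ≤ h (G.tgt e') * G.r e' ^ δ := mul_nonneg (hh0 _) (rpow_pos G δ e').le
  by_cases h1 : e' = e
  · subst h1
    simp [(G.elt_irrefl e')]
  · by_cases h2 : G.elt e' e
    · simp [h2, h1, G.elt_src h2]
    · by_cases h3 : G.src e' = G.src e
      · simp [h1, h2, h3, hnn]
      · simp [h1, h2, h3]

open Classical in
lemma bCoef_max_eq_Svert (G : OGIFS X N) (δ : ℝ) (h : Fin N → ℝ) {m : G.Edge} {j : Fin N}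
    (hm : G.src m = j) (hmax : ∀ e, G.src e = j → e = m ∨ G.elt e m) :
    G.bCoef δ h m + h (G.tgt m) * G.r m ^ δ = Svert G δ h j := by
  have he : h (G.tgt m) * G.r m ^ δ
      = ∑ e' : G.Edge, if e' = m then h (G.tgt e') * G.r e' ^ δ else 0 := by
    rw [Finset.sum_ite_eq' Finset.univ m (fun e' => h (G.tgt e') * G.r e' ^ δ)]
    simp
  rw [OGIFS.bCoef, Svert, he, ← Finset.sum_add_distrib]
  apply Finset.sum_congr rfl
  intro e' _
  by_cases h1 : e' = m
  · subst h1
    simp [(G.elt_irrefl e'), hm]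
  · by_cases h2 : G.elt e' m
    · have : G.src e' = j := by rw [G.elt_src h2, hm]
      simp [h1, h2, this]
    · have : ¬ G.src e' = j := by
        intro hc
        rcases hmax e' hc with h | h
        · exact h1 h
        · exact h2 h
      simp [h1, h2, this]

/-- Existence of a maximal edge at a vertex with at least one outgoing edge. -/
lemma exists_maxE (G : OGIFS X N) {j : Fin N} (hne : ∃ e : G.Edge, G.src e = j) :
    ∃ m : G.Edge, G.src m = j ∧ ∀ e, G.src e = j → e = m ∨ G.elt e m := by
  classical
  have key : ∀ s : Finset G.Edge, s.Nonempty → (∀ e ∈ s, G.src e = j) →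
      ∃ m ∈ s, ∀ e ∈ s, e ≠ m → G.elt e m := by
    intro s
    induction s using Finset.induction_on with
    | empty => intro hs _; exact absurd hs (by simp)
    | @insert a s ha ih =>
      intro _ hsrc
      by_cases hs : s.Nonempty
      · obtain ⟨m, hm, hmax⟩ := ih hs (fun e he => hsrc e (Finset.mem_insert_of_mem he))
        have hsa : G.src a = G.src m := by
          rw [hsrc a (Finset.mem_insert_self a s), hsrc m (Finset.mem_insert_of_mem hm)]
        rcases G.elt_total a m hsa with hc | hc | hc
        · refine ⟨m, Finset.mem_insert_of_mem hm, ?_⟩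
          intro e he hne'
          rcases Finset.mem_insert.mp he with rfl | he'
          · exact hc
          · exact hmax e he' hne'
        · exact absurd (hc ▸ hm) ha
        · refine ⟨a, Finset.mem_insert_self a s, ?_⟩
          intro e he hne'
          rcases Finset.mem_insert.mp he with rfl | he'
          · exact absurd rfl hne'
          · by_cases hem : e = m
            · exact hem ▸ hc
            · exact G.elt_trans (hmax e he' hem) hc
      · rw [Finset.not_nonempty_iff_eq_empty] at hs
        subst hs
        refine ⟨a, Finset.mem_insert_self a ∅, ?_⟩
        intro e he hne'
        rcases Finset.mem_insert.mp he with rfl | he'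
        · exact absurd rfl hne'
        · simp at he'
  obtain ⟨e0, he0⟩ := hne
  obtain ⟨m, hm, hmax⟩ := key (Finset.univ.filter fun e => G.src e = j)
    ⟨e0, by simp [he0]⟩ (fun e he => (Finset.mem_filter.mp he).2)
  refine ⟨m, (Finset.mem_filter.mp hm).2, ?_⟩
  intro e he
  by_cases hem : e = m
  · exact Or.inl hem
  · exact Or.inr (hmax e (by simp [he]) hem)

end Lem82
end

noncomputable section
namespace Lem82
open OGIFS GIFS

variable {X : Type} [MetricSpace X] {N : ℕ}

/-- Extend a finite path to an infinite sequence of edges using a successor choice `nxt`. -/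
def extSeq (G : GIFS X N) (nxt : Fin N → G.Edge) (i : Fin N) (σ : List G.Edge) : ℕ → G.Edge
  | 0 => if hL : 0 < σ.length then σ.get ⟨0, hL⟩ else nxt i
  | (k+1) => if hk : k + 1 < σ.length then σ.get ⟨k+1, hk⟩
             else nxt (G.tgt (extSeq G nxt i σ k))

lemma extSeq_get (G : GIFS X N) (nxt : Fin N → G.Edge) (i : Fin N) (σ : List G.Edge) :
    ∀ k (hk : k < σ.length), extSeq G nxt i σ k = σ.get ⟨k, hk⟩ := by
  intro k hk
  cases k with
  | zero => simp [extSeq, hk]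
  | succ m => simp [extSeq, hk]

lemma extSeq_isInfPath (G : GIFS X N) (nxt : Fin N → G.Edge)
    (hnxt : ∀ v, G.src (nxt v) = v) (i : Fin N) (σ : List G.Edge) (hσ : G.IsPathFrom i σ) :
    G.src (extSeq G nxt i σ 0) = i ∧
      ∀ n, G.tgt (extSeq G nxt i σ n) = G.src (extSeq G nxt i σ (n+1)) := by
  constructor
  · cases σ with
    | nil => simp [extSeq, hnxt]
    | cons a l =>
      have h0 : (0:ℕ) < (a :: l).length := by simp
      rw [extSeq_get G nxt i _ 0 h0]
      exact hσ.2 a rfl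
  · intro n
    by_cases hk : n + 1 < σ.length
    · have hn : n < σ.length := Nat.lt_of_succ_lt hk
      rw [extSeq_get G nxt i σ n hn, extSeq_get G nxt i σ (n+1) hk]
      have := List.isChain_iff_getElem.mp hσ.1 n (by omega)
      simpa using this
    · have : extSeq G nxt i σ (n+1) = nxt (G.tgt (extSeq G nxt i σ n)) := by
        simp [extSeq, hk]
      rw [this, hnxt]

lemma prefixList_eq_of_get {α : Type} (θ : ℕ → α) (l : List α)
    (hl : ∀ k (hk : k < l.length), θ k = l.get ⟨k, hk⟩) : prefixList θ l.length = l := by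
  apply List.ext_get
  · simp [prefixList]
  · intro k h1 h2
    simp only [prefixList, List.get_ofFn, Fin.coe_cast]
    exact hl k h2

lemma prefixList_extSeq (G : GIFS X N) (nxt : Fin N → G.Edge) (i : Fin N) (σ : List G.Edge) :
    prefixList (extSeq G nxt i σ) σ.length = σ :=
  prefixList_eq_of_get _ _ (extSeq_get G nxt i σ)

lemma prefixList_extSeq_append (G : GIFS X N) (nxt : Fin N → G.Edge) (i : Fin N)
    (σ τ : List G.Edge) :
    prefixList (extSeq G nxt i (σ ++ τ)) σ.length = σ := by
  apply prefixList_eq_of_get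
  intro k hk
  have hk' : k < (σ ++ τ).length := by simp; omega
  rw [extSeq_get G nxt i _ k hk']
  simp [List.getElem_append, hk]

/-- The path following maximal edges, of length `n`, starting at `j`. -/
def maxTau (G : GIFS X N) (M : Fin N → G.Edge) (j : Fin N) : ℕ → List G.Edge
  | 0 => []
  | (n+1) => maxTau G M j n ++ [M (G.pathTgt j (maxTau G M j n))]

lemma maxTau_path (G : GIFS X N) (M : Fin N → G.Edge) (hM : ∀ v, G.src (M v) = v)
    (j : Fin N) (n : ℕ) : G.IsPathFrom j (maxTau G M j n) := by
  induction n with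
  | zero => exact isPathFrom_nil G j
  | succ m ih =>
    have h2 : G.IsPathFrom (G.pathTgt j (maxTau G M j m)) [M (G.pathTgt j (maxTau G M j m))] :=
      ⟨List.isChain_singleton _, by simpa using hM _⟩
    exact (isPathFrom_append G ih rfl h2).1

lemma maxTau_tgt (G : GIFS X N) (M : Fin N → G.Edge) (hM : ∀ v, G.src (M v) = v)
    (j : Fin N) (n : ℕ) :
    G.pathTgt j (maxTau G M j (n+1)) = G.tgt (M (G.pathTgt j (maxTau G M j n))) := by
  have h2 : G.IsPathFrom (G.pathTgt j (maxTau G M j n)) [M (G.pathTgt j (maxTau G M j n))] :=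
    ⟨List.isChain_singleton _, by simpa using hM _⟩
  have := (isPathFrom_append G (maxTau_path G M hM j n) rfl h2).2
  rw [maxTau]
  rw [this]
  simp [GIFS.pathTgt]

lemma maxTau_length (G : GIFS X N) (M : Fin N → G.Edge) (j : Fin N) (n : ℕ) :
    (maxTau G M j n).length = n := by
  induction n with
  | zero => rfl
  | succ m ih => simp [maxTau, ih]

end Lem82
end

noncomputable section
namespace Lem82
open OGIFS GIFS
open scoped ENNReal NNReal

lemma hmeas_le_Svert {d N : ℕ} (G : OGIFS (EuclideanSpace ℝ (Fin d)) N)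
    (E : Fin N → Set (EuclideanSpace ℝ (Fin d))) (hE : G.toGIFS.IsInvariant E)
    {δ : ℝ} (hδ : 0 < δ) (hfin : ∀ j, 0 < μH[δ] (E j) ∧ μH[δ] (E j) < ⊤)
    (h : Fin N → ℝ) (hh : ∀ j, h j = (μH[δ] (E j)).toReal) (j : Fin N) :
    h j ≤ Svert G δ h j := by
  classical
  set K : G.Edge → NNReal := fun e => ⟨G.r e, (G.r_pos e).le⟩ with hK
  have hlip : ∀ e : G.Edge, μH[δ] (G.g e '' E (G.tgt e))
      ≤ ((K e : ℝ≥0∞)) ^ δ * μH[δ] (E (G.tgt e)) := by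
    intro e
    have hl : LipschitzWith (K e) (G.g e) :=
      LipschitzWith.of_dist_le_mul (fun x y => le_of_eq (G.g_sim e x y))
    exact hl.hausdorffMeasure_image_le hδ.le _
  have hterm_lt : ∀ e : G.Edge, ((K e : ℝ≥0∞)) ^ δ * μH[δ] (E (G.tgt e)) < ⊤ := by
    intro e
    exact ENNReal.mul_lt_top (ENNReal.rpow_lt_top_of_nonneg hδ.le ENNReal.coe_ne_top)
      (hfin _).2
  have hsub : μH[δ] (E j) ≤ ∑ e : G.Edge,
      (if G.src e = j then ((K e : ℝ≥0∞)) ^ δ * μH[δ] (E (G.tgt e)) else 0) := by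
    calc μH[δ] (E j) = μH[δ] (⋃ e ∈ {e : G.Edge | G.src e = j}, G.g e '' E (G.tgt e)) := by
          conv_lhs => rw [hE.2.2 j]
      _ = μH[δ] (⋃ e ∈ (Finset.univ.filter fun e : G.Edge => G.src e = j),
            G.g e '' E (G.tgt e)) := by
          congr 1
          ext x
          simp
      _ ≤ ∑ e ∈ (Finset.univ.filter fun e : G.Edge => G.src e = j),
            μH[δ] (G.g e '' E (G.tgt e)) := measure_biUnion_finset_le _ _
      _ = ∑ e : G.Edge, (if G.src e = j then μH[δ] (G.g e '' E (G.tgt e)) else 0) :=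
          Finset.sum_filter _ _
      _ ≤ _ := by
          apply Finset.sum_le_sum
          intro e _
          by_cases hc : G.src e = j
          · simpa [hc] using hlip e
          · simp [hc]
  have hTne : (∑ e : G.Edge,
      (if G.src e = j then ((K e : ℝ≥0∞)) ^ δ * μH[δ] (E (G.tgt e)) else 0)) ≠ ⊤ := by
    refine (ENNReal.sum_lt_top.mpr ?_).ne
    intro e _
    by_cases hc : G.src e = j
    · simpa [hc] using hterm_lt e
    · simp [hc]
  have h1 : h j ≤ (∑ e : G.Edge,
      (if G.src e = j then ((K e : ℝ≥0∞)) ^ δ * μH[δ] (E (G.tgt e)) else 0)).toReal := by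
    rw [hh j]
    exact (ENNReal.toReal_le_toReal (hfin j).2.ne hTne).mpr hsub
  refine h1.trans (le_of_eq ?_)
  rw [ENNReal.toReal_sum]
  · apply Finset.sum_congr rfl
    intro e _
    by_cases hc : G.src e = j
    · simp only [hc, if_true]
      rw [ENNReal.toReal_mul, ← ENNReal.toReal_rpow, hh (G.tgt e)]
      have : ((K e : ℝ≥0∞)).toReal = G.r e := rfl
      rw [this, mul_comm]
    · simp [hc]
  · intro e _
    by_cases hc : G.src e = j
    · simpa [hc] using (hterm_lt e).ne
    · simp [hc]

end Lem82
end

noncomputable section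
namespace Lem82
open OGIFS GIFS
open scoped ENNReal NNReal

variable {X : Type} [MetricSpace X] {N : ℕ}

lemma slope_le_pow (G : OGIFS X N) (δ : ℝ) {c : ℝ} (hc : ∀ e : G.Edge, G.r e ^ δ ≤ c)
    (l : List G.Edge) : slope G δ l ≤ c ^ l.length := by
  induction l with
  | nil => simp
  | cons e l ih =>
    simp only [slope_cons, List.length_cons, pow_succ]
    rw [mul_comm (c ^ l.length) c]
    exact mul_le_mul (hc e) ih (slope_pos G δ l).le
      (le_trans (rpow_pos G δ e).le (hc e))

lemma Svert_le_h {d N : ℕ} (G : OGIFS (EuclideanSpace ℝ (Fin d)) N)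
    (E : Fin N → Set (EuclideanSpace ℝ (Fin d))) (hE : G.toGIFS.IsInvariant E)
    {δ : ℝ} (hδ : 0 < δ) (hfin : ∀ j, 0 < μH[δ] (E j) ∧ μH[δ] (E j) < ⊤)
    (h : Fin N → ℝ) (hh : ∀ j, h j = (μH[δ] (E j)).toReal) (i : Fin N)
    (ρ : G.toGIFS.InfPath i → ℝ) (hρ : G.IsFCoding δ h i ρ)
    {j : Fin N} (hreach : Reach G.toGIFS i j) :
    Svert G δ h j ≤ h j := by
  classical
  have hh0 : ∀ w, 0 ≤ h w := fun w => by rw [hh w]; exact ENNReal.toReal_nonneg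
  have hES : ∀ w, h w ≤ Svert G δ h w := hmeas_le_Svert G E hE hδ hfin h hh
  have hne : ∀ w : Fin N, ∃ e : G.Edge, G.src e = w := by
    intro w
    have hnonempty := hE.1 w
    rw [hE.2.2 w] at hnonempty
    obtain ⟨x, hx⟩ := hnonempty
    simp only [Set.mem_iUnion] at hx
    obtain ⟨e, he, -⟩ := hx
    exact ⟨e, he⟩
  choose M hMsrc hMmax using fun w => exists_maxE G (hne w)
  obtain ⟨σ, hσ, hσt⟩ := hreach
  have hτpath : ∀ n, G.toGIFS.IsPathFrom j (maxTau G.toGIFS M j n) :=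
    maxTau_path _ M hMsrc j
  -- B n ≤ h j for all n
  have hBle : ∀ n, G.fPathMap δ h (maxTau G.toGIFS M j n) 0 ≤ h j := by
    intro n
    have hp := isPathFrom_append G.toGIFS hσ hσt (hτpath n)
    obtain ⟨h0, hstep⟩ := extSeq_isInfPath G.toGIFS M hMsrc i (σ ++ maxTau G.toGIFS M j n) hp.1
    set θ : G.toGIFS.InfPath i := ⟨extSeq G.toGIFS M i (σ ++ maxTau G.toGIFS M j n),
      h0, hstep⟩ with hθ
    have hval : θ.1 = extSeq G.toGIFS M i (σ ++ maxTau G.toGIFS M j n) := rfl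
    have m1 := hρ θ (σ ++ maxTau G.toGIFS M j n).length
    rw [hval, prefixList_extSeq] at m1
    rw [OGIFS.fPathSet] at m1
    obtain ⟨y, hy, hyeq⟩ := m1
    have low : G.fPathMap δ h (σ ++ maxTau G.toGIFS M j n) 0 ≤ ρ θ := by
      rw [← hyeq]
      exact fPathMap_mono G δ h _ (Set.mem_Icc.mp hy).1
    have m2 := hρ θ σ.length
    rw [hval, prefixList_extSeq_append] at m2
    rw [OGIFS.fPathSet] at m2
    obtain ⟨z, hz, hzeq⟩ := m2
    have up : ρ θ ≤ G.fPathMap δ h σ (h (G.toGIFS.pathTgt i σ)) := by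
      rw [← hzeq]
      exact fPathMap_mono G δ h _ (Set.mem_Icc.mp hz).2
    rw [hσt] at up
    rw [fPathMap_append] at low
    have hcomb : G.fPathMap δ h σ (G.fPathMap δ h (maxTau G.toGIFS M j n) 0)
        ≤ G.fPathMap δ h σ (h j) := le_trans low up
    exact (fPathMap_le_iff G δ h σ).mp hcomb
  -- key induction
  have hkey : ∀ n, Svert G δ h j ≤ G.fPathMap δ h (maxTau G.toGIFS M j (n+1)) 0
      + slope G δ (maxTau G.toGIFS M j (n+1))
        * h (G.toGIFS.pathTgt j (maxTau G.toGIFS M j (n+1))) := by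
    intro n
    induction n with
    | zero =>
      have hτ1 : maxTau G.toGIFS M j 1 = [M j] := by
        show maxTau G.toGIFS M j 0 ++ [M (G.toGIFS.pathTgt j (maxTau G.toGIFS M j 0))] = [M j]
        simp [maxTau, GIFS.pathTgt]
      rw [hτ1, ← bCoef_max_eq_Svert G δ h (hMsrc j) (hMmax j)]
      have h1 : G.fPathMap δ h [M j] 0 = G.bCoef δ h (M j) := by
        simp [OGIFS.fmap]
      have h2 : G.toGIFS.pathTgt j [M j] = G.tgt (M j) := by simp [GIFS.pathTgt]
      rw [h1, h2]
      simp only [slope_cons, slope_nil]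
      ring_nf
      apply le_of_eq
      ring
    | succ m ih =>
      have hst : maxTau G.toGIFS M j (m+2) = maxTau G.toGIFS M j (m+1)
          ++ [M (G.toGIFS.pathTgt j (maxTau G.toGIFS M j (m+1)))] := rfl
      have hB : G.fPathMap δ h (maxTau G.toGIFS M j (m+2)) 0
          = G.fPathMap δ h (maxTau G.toGIFS M j (m+1)) 0
            + slope G δ (maxTau G.toGIFS M j (m+1))
              * G.bCoef δ h (M (G.toGIFS.pathTgt j (maxTau G.toGIFS M j (m+1)))) := by
        rw [hst, fPathMap_append]
        have : G.fPathMap δ h [M (G.toGIFS.pathTgt j (maxTau G.toGIFS M j (m+1)))] 0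
            = G.bCoef δ h (M (G.toGIFS.pathTgt j (maxTau G.toGIFS M j (m+1)))) := by
          simp [OGIFS.fmap]
        rw [this, fPathMap_affine]
        ring
      have hP : slope G δ (maxTau G.toGIFS M j (m+2))
          = slope G δ (maxTau G.toGIFS M j (m+1))
            * (G.r (M (G.toGIFS.pathTgt j (maxTau G.toGIFS M j (m+1)))) ^ δ) := by
        rw [hst, slope_append]
        simp
      have hv : G.toGIFS.pathTgt j (maxTau G.toGIFS M j (m+2))
          = G.tgt (M (G.toGIFS.pathTgt j (maxTau G.toGIFS M j (m+1)))) :=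
        maxTau_tgt G.toGIFS M hMsrc j (m+1)
      set w := G.toGIFS.pathTgt j (maxTau G.toGIFS M j (m+1)) with hw
      have hSw : G.bCoef δ h (M w) + h (G.tgt (M w)) * G.r (M w) ^ δ = Svert G δ h w :=
        bCoef_max_eq_Svert G δ h (hMsrc w) (hMmax w)
      have hPpos : 0 < slope G δ (maxTau G.toGIFS M j (m+1)) := slope_pos G δ _
      calc Svert G δ h j
          ≤ G.fPathMap δ h (maxTau G.toGIFS M j (m+1)) 0
            + slope G δ (maxTau G.toGIFS M j (m+1)) * h w := ih
        _ ≤ G.fPathMap δ h (maxTau G.toGIFS M j (m+1)) 0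
            + slope G δ (maxTau G.toGIFS M j (m+1)) * Svert G δ h w := by
            have := mul_le_mul_of_nonneg_left (hES w) hPpos.le
            linarith
        _ = G.fPathMap δ h (maxTau G.toGIFS M j (m+2))
              0 + slope G δ (maxTau G.toGIFS M j (m+2))
              * h (G.toGIFS.pathTgt j (maxTau G.toGIFS M j (m+2))) := by
            rw [hB, hP, hv, ← hSw]
            ring
  -- pass to the limit
  have hEdgeNe : Nonempty G.Edge := ⟨M j⟩
  have hUnivNe : (Finset.univ : Finset G.Edge).Nonempty := Finset.univ_nonempty
  set c : ℝ := Finset.univ.sup' hUnivNe (fun e => G.r e ^ δ) with hc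
  have hcle : ∀ e : G.Edge, G.r e ^ δ ≤ c := by
    intro e
    rw [hc]
    exact Finset.le_sup' (fun e => G.r e ^ δ) (Finset.mem_univ e)
  have hc0 : 0 ≤ c := le_trans (rpow_pos G δ (M j)).le (hcle (M j))
  have hc1 : c < 1 := by
    rw [hc, Finset.sup'_lt_iff]
    intro e _
    exact Real.rpow_lt_one (G.r_pos e).le (G.r_lt_one e) hδ
  set H : ℝ := ∑ w : Fin N, h w with hH
  have hhH : ∀ w, h w ≤ H := by
    intro w
    exact Finset.single_le_sum (fun u _ => hh0 u) (Finset.mem_univ w)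
  have hbound : ∀ n : ℕ, Svert G δ h j ≤ h j + c ^ (n+1) * H := by
    intro n
    have h1 := hkey n
    have h2 := hBle (n+1)
    have h3 : slope G δ (maxTau G.toGIFS M j (n+1)) ≤ c ^ (n+1) := by
      have := slope_le_pow G δ hcle (maxTau G.toGIFS M j (n+1))
      rwa [maxTau_length] at this
    have h4 : slope G δ (maxTau G.toGIFS M j (n+1))
        * h (G.toGIFS.pathTgt j (maxTau G.toGIFS M j (n+1))) ≤ c ^ (n+1) * H := by
      apply mul_le_mul h3 (hhH _) (hh0 _) (by positivity)
    linarith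
  have htend : Filter.Tendsto (fun n : ℕ => h j + c ^ (n+1) * H) Filter.atTop
      (nhds (h j)) := by
    have h0 : Filter.Tendsto (fun n : ℕ => c ^ n) Filter.atTop (nhds 0) :=
      tendsto_pow_atTop_nhds_zero_of_lt_one hc0 hc1
    have h1 : Filter.Tendsto (fun n : ℕ => c ^ (n+1) * H) Filter.atTop (nhds 0) := by
      have h2 := (h0.mul_const (c * H))
      rw [zero_mul] at h2
      convert h2 using 2 with n
      ring
    have := h1.const_add (h j)
    simpa using this
  exact ge_of_tendsto htend (Filter.Eventually.of_forall hbound)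

end Lem82
end

noncomputable section
namespace Lem82
open OGIFS GIFS

variable {X : Type} [MetricSpace X] {N : ℕ}

lemma nesting_upper (G : OGIFS X N) (δ : ℝ) {h : Fin N → ℝ} (hh0 : ∀ w, 0 ≤ h w)
    {i : Fin N} (hA : ∀ w, Reach G.toGIFS i w → Svert G δ h w ≤ h w) :
    ∀ (l : List G.Edge) (j : Fin N), Reach G.toGIFS i j → G.toGIFS.IsPathFrom j l →
      G.fPathMap δ h l (h (G.toGIFS.pathTgt j l)) ≤ h j := by
  intro l
  induction l with
  | nil =>
    intro j _ _
    simp [GIFS.pathTgt]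
  | cons e l ih =>
    intro j hr hp
    obtain ⟨hsrc, hp'⟩ := isPathFrom_cons hp
    rw [pathTgt_cons, fPathMap_cons]
    have hr' : Reach G.toGIFS i (G.tgt e) := reach_step hr hsrc
    have h1 := ih (G.tgt e) hr' hp'
    have h2 : G.fmap δ h e (G.fPathMap δ h l (h (G.toGIFS.pathTgt (G.tgt e) l)))
        ≤ G.fmap δ h e (h (G.tgt e)) := by
      rw [OGIFS.fmap, OGIFS.fmap]
      have := mul_le_mul_of_nonneg_left h1 (rpow_pos G δ e).le
      linarith
    refine h2.trans ?_
    rw [OGIFS.fmap]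
    have h3 := bCoef_add_le_Svert G δ hh0 e
    rw [hsrc] at h3
    have h4 := hA j hr
    have hcomm : G.r e ^ δ * h (G.tgt e) = h (G.tgt e) * G.r e ^ δ := mul_comm _ _
    linarith

lemma ordering (G : OGIFS X N) (δ : ℝ) {h : Fin N → ℝ} (hh0 : ∀ w, 0 ≤ h w)
    {i : Fin N} (hA : ∀ w, Reach G.toGIFS i w → Svert G δ h w ≤ h w) :
    ∀ (α β : List G.Edge) (j : Fin N), Reach G.toGIFS i j →
      G.toGIFS.IsPathFrom j α → G.toGIFS.IsPathFrom j β → α.length = β.length →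
      List.Lex G.elt α β →
      G.fPathMap δ h α (h (G.toGIFS.pathTgt j α)) ≤ G.fPathMap δ h β 0 := by
  intro α
  induction α with
  | nil =>
    intro β j _ _ _ hlen hlex
    cases β with
    | nil => cases hlex
    | cons b m => simp at hlen
  | cons e α' ih =>
    intro β j hr hα hβ hlen hlex
    cases β with
    | nil => cases hlex
    | cons f β' =>
      obtain ⟨hsrce, hα'⟩ := isPathFrom_cons hα
      obtain ⟨hsrcf, hβ'⟩ := isPathFrom_cons hβ
      cases hlex with
      | cons hlex' =>
        rw [pathTgt_cons, fPathMap_cons, fPathMap_cons]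
        have hle := ih β' (G.tgt e) (reach_step hr hsrce) hα' hβ' (by simpa using hlen) hlex'
        rw [OGIFS.fmap, OGIFS.fmap]
        have := mul_le_mul_of_nonneg_left hle (rpow_pos G δ e).le
        linarith
      | rel hef =>
        rw [pathTgt_cons, fPathMap_cons, fPathMap_cons]
        have h1 : G.fPathMap δ h α' (h (G.toGIFS.pathTgt (G.tgt e) α')) ≤ h (G.tgt e) :=
          nesting_upper G δ hh0 hA α' (G.tgt e) (reach_step hr hsrce) hα'
        have h3 := bCoef_add_le_of_elt G δ hh0 hef
        have h4 : 0 ≤ G.fPathMap δ h β' 0 := fPathMap_zero_nonneg G δ hh0 β'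
        rw [OGIFS.fmap, OGIFS.fmap]
        have m1 := mul_le_mul_of_nonneg_left h1 (rpow_pos G δ e).le
        have hcomm : G.r e ^ δ * h (G.tgt e) = h (G.tgt e) * G.r e ^ δ := mul_comm _ _
        have m2 : 0 ≤ G.r f ^ δ * G.fPathMap δ h β' 0 :=
          mul_nonneg (rpow_pos G δ f).le h4
        linarith

lemma trichotomy (G : OGIFS X N) :
    ∀ (α β : List G.Edge) (j : Fin N), G.toGIFS.IsPathFrom j α → G.toGIFS.IsPathFrom j β →
      α.length = β.length → α = β ∨ List.Lex G.elt α β ∨ List.Lex G.elt β α := by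
  intro α
  induction α with
  | nil =>
    intro β j _ _ hlen
    left
    cases β with
    | nil => rfl
    | cons b m => simp at hlen
  | cons e α' ih =>
    intro β j hα hβ hlen
    cases β with
    | nil => simp at hlen
    | cons f β' =>
      obtain ⟨hsrce, hα'⟩ := isPathFrom_cons hα
      obtain ⟨hsrcf, hβ'⟩ := isPathFrom_cons hβ
      rcases G.elt_total e f (by rw [hsrce, hsrcf]) with hc | hc | hc
      · exact Or.inr (Or.inl (List.Lex.rel hc))
      · subst hc
        rcases ih β' (G.tgt e) hα' hβ' (by simpa using hlen) with hc | hc | hc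
        · left; rw [hc]
        · exact Or.inr (Or.inl (List.Lex.cons hc))
        · exact Or.inr (Or.inr (List.Lex.cons hc))
      · exact Or.inr (Or.inr (List.Lex.rel hc))

end Lem82
end

noncomputable section
namespace Lem82
open OGIFS GIFS

variable {X : Type} [MetricSpace X] {N : ℕ}

/-- Product of contraction ratios along a path. -/
def prodr (G : GIFS X N) (l : List G.Edge) : ℝ := (l.map G.r).prod

@[simp] lemma prodr_nil (G : GIFS X N) : prodr G [] = 1 := by simp [prodr]

@[simp] lemma prodr_cons (G : GIFS X N) (e : G.Edge) (l : List G.Edge) :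
    prodr G (e :: l) = G.r e * prodr G l := by simp [prodr]

lemma prodr_nonneg (G : GIFS X N) (l : List G.Edge) : 0 ≤ prodr G l := by
  induction l with
  | nil => simp
  | cons e l ih => simpa using mul_nonneg (G.r_pos e).le ih

lemma prodr_le_pow (G : GIFS X N) {c : ℝ} (hc : ∀ e : G.Edge, G.r e ≤ c)
    (l : List G.Edge) : prodr G l ≤ c ^ l.length := by
  induction l with
  | nil => simp
  | cons e l ih =>
    simp only [prodr_cons, List.length_cons, pow_succ]
    rw [mul_comm (c ^ l.length) c]
    by_cases hne : Nonempty G.Edge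
    · exact mul_le_mul (hc e) ih (prodr_nonneg G l) (le_trans (G.r_pos e).le (hc e))
    · exact absurd ⟨e⟩ hne

@[simp] lemma pathMap_nil (G : GIFS X N) (x : X) : G.pathMap [] x = x := rfl

@[simp] lemma pathMap_cons (G : GIFS X N) (e : G.Edge) (l : List G.Edge) (x : X) :
    G.pathMap (e :: l) x = G.g e (G.pathMap l x) := rfl

lemma pathMap_dist (G : GIFS X N) (l : List G.Edge) (x y : X) :
    dist (G.pathMap l x) (G.pathMap l y) = prodr G l * dist x y := by
  induction l with
  | nil => simp
  | cons e l ih =>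
    simp only [pathMap_cons, prodr_cons, G.g_sim e, ih]
    ring

lemma g_continuous (G : GIFS X N) (e : G.Edge) : Continuous (G.g e) := by
  have hl : LipschitzWith ⟨G.r e, (G.r_pos e).le⟩ (G.g e) :=
    LipschitzWith.of_dist_le_mul (fun x y => le_of_eq (G.g_sim e x y))
  exact hl.continuous

lemma pathMap_continuous (G : GIFS X N) (l : List G.Edge) : Continuous (G.pathMap l) := by
  induction l with
  | nil => exact continuous_id
  | cons e l ih => exact (g_continuous G e).comp ih

end Lem82
end

noncomputable section
/-- **Lemma 8.2.** If `x ∈ F_i` has two `ρ_i`-codings `ω, γ`, then `π_i(ω) = π_i(γ)`;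
consequently `ψ_i = π_i ∘ ρ_i⁻¹` is a well-defined map from `F_i` to `E_i`. -/
theorem two_rho_codings_same_pi {d N : ℕ} (G : OGIFS (EuclideanSpace ℝ (Fin d)) N)
    (E : Fin N → Set (EuclideanSpace ℝ (Fin d))) (hE : G.toGIFS.IsInvariant E) (hlin : G.IsLinear E)
    (hosc : G.toGIFS.OSC) (δ : ℝ) (hδ : G.toGIFS.IsSimDim δ)
    (hfin : ∀ j, 0 < μH[δ] (E j) ∧ μH[δ] (E j) < ⊤)
    (h : Fin N → ℝ) (hh : ∀ j, h j = (μH[δ] (E j)).toReal) (i : Fin N)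
    (π : G.toGIFS.InfPath i → EuclideanSpace ℝ (Fin d)) (hπ : G.toGIFS.IsCoding E i π)
    (ρ : G.toGIFS.InfPath i → ℝ) (hρ : G.IsFCoding δ h i ρ)
    (ω γ : G.toGIFS.InfPath i) (hx : ρ ω = ρ γ) :
    π ω = π γ := by
  classical
  open Lem82 in
  have hδpos : 0 < δ := hδ.1
  have hh0 : ∀ w, 0 ≤ h w := fun w => by rw [hh w]; exact ENNReal.toReal_nonneg
  have hhpos : ∀ w, 0 < h w := fun w => by
    rw [hh w]; exact ENNReal.toReal_pos (hfin w).1.ne' (hfin w).2.ne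
  have hA : ∀ w, Lem82.Reach G.toGIFS i w → Lem82.Svert G δ h w ≤ h w :=
    fun w hw => Lem82.Svert_le_h G E hE hδpos hfin h hh i ρ hρ hw
  -- Step 1: the cylinders of the two codings intersect at every level
  have hint : ∀ n : ℕ, (G.toGIFS.pathSet E i (prefixList ω.1 n)
      ∩ G.toGIFS.pathSet E i (prefixList γ.1 n)).Nonempty := by
    intro n
    have key : ∀ ω' γ' : G.toGIFS.InfPath i, ρ ω' = ρ γ' →
        List.Lex G.elt (prefixList ω'.1 n) (prefixList γ'.1 n) →
        (G.toGIFS.pathSet E i (prefixList ω'.1 n)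
          ∩ G.toGIFS.pathSet E i (prefixList γ'.1 n)).Nonempty := by
      intro ω' γ' hx' hlex
      have hadj : G.Adjacent i (prefixList ω'.1 n) (prefixList γ'.1 n) := by
        refine ⟨Lem82.isPathFrom_prefix ω' n, Lem82.isPathFrom_prefix γ' n,
          by simp [Lem82.prefixList_length], hlex, ?_⟩
        rintro ⟨η, hηp, hηlen, hlt1, hlt2⟩
        have hxa := hρ ω' n
        have hxb := hρ γ' n
        rw [OGIFS.fPathSet] at hxa hxb
        obtain ⟨y, hy, hyeq⟩ := hxa
        obtain ⟨z, hz, hzeq⟩ := hxb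
        have hup : ρ γ' ≤ G.fPathMap δ h (prefixList ω'.1 n)
            (h (G.toGIFS.pathTgt i (prefixList ω'.1 n))) := by
          rw [← hx', ← hyeq]
          exact Lem82.fPathMap_mono G δ h _ (Set.mem_Icc.mp hy).2
        have hlow : G.fPathMap δ h (prefixList γ'.1 n) 0 ≤ ρ γ' := by
          rw [← hzeq]
          exact Lem82.fPathMap_mono G δ h _ (Set.mem_Icc.mp hz).1
        have o1 := Lem82.ordering G δ hh0 hA (prefixList ω'.1 n) η i
          (Lem82.reach_self G.toGIFS i) (Lem82.isPathFrom_prefix ω' n) hηp hηlen.symm hlt1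
        have o2 := Lem82.ordering G δ hh0 hA η (prefixList γ'.1 n) i
          (Lem82.reach_self G.toGIFS i) hηp (Lem82.isPathFrom_prefix γ' n)
          (by simp [hηlen, Lem82.prefixList_length]) hlt2
        have haff := Lem82.fPathMap_affine G δ h η (h (G.toGIFS.pathTgt i η))
        have hwid : 0 < Lem82.slope G δ η * h (G.toGIFS.pathTgt i η) :=
          mul_pos (Lem82.slope_pos G δ η) (hhpos _)
        linarith
      exact hlin i _ _ hadj
    rcases Lem82.trichotomy G (prefixList ω.1 n) (prefixList γ.1 n) i
        (Lem82.isPathFrom_prefix ω n) (Lem82.isPathFrom_prefix γ n)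
        (by simp [Lem82.prefixList_length]) with hc | hc | hc
    · rw [hc, Set.inter_self]
      exact (hE.1 _).image _
    · exact key ω γ hx hc
    · rw [Set.inter_comm]
      exact key γ ω hx.symm hc
  -- Step 2: metric estimate
  have hEdgeNe : Nonempty G.Edge := ⟨ω.1 0⟩
  have hUnivNe : (Finset.univ : Finset G.Edge).Nonempty := Finset.univ_nonempty
  set cr : ℝ := Finset.univ.sup' hUnivNe G.r with hcr
  have hcrle : ∀ e : G.Edge, G.r e ≤ cr := by
    intro e
    rw [hcr]
    exact Finset.le_sup' G.r (Finset.mem_univ e)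
  have hcr0 : 0 ≤ cr := le_trans (G.r_pos (ω.1 0)).le (hcrle _)
  have hcr1 : cr < 1 := by
    rw [hcr, Finset.sup'_lt_iff]
    intro e _
    exact G.r_lt_one e
  set D : ℝ := ∑ w : Fin N, Metric.diam (E w) with hD
  have hD0 : 0 ≤ D := Finset.sum_nonneg fun w _ => Metric.diam_nonneg
  have hDle : ∀ w, Metric.diam (E w) ≤ D := fun w =>
    Finset.single_le_sum (fun u _ => Metric.diam_nonneg) (Finset.mem_univ w)
  have hdiam : ∀ (l : List G.Edge),
      Metric.diam (G.toGIFS.pathSet E i l) ≤ cr ^ l.length * D := by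
    intro l
    apply Metric.diam_le_of_forall_dist_le
      (mul_nonneg (pow_nonneg hcr0 _) hD0)
    rintro u ⟨a, ha, rfl⟩ v ⟨b, hb, rfl⟩
    rw [Lem82.pathMap_dist]
    calc Lem82.prodr G.toGIFS l * dist a b
        ≤ Lem82.prodr G.toGIFS l * Metric.diam (E (G.toGIFS.pathTgt i l)) :=
          mul_le_mul_of_nonneg_left
            (Metric.dist_le_diam_of_mem (hE.2.1 _).isBounded ha hb)
            (Lem82.prodr_nonneg G.toGIFS l)
      _ ≤ cr ^ l.length * D :=
          mul_le_mul (Lem82.prodr_le_pow G.toGIFS hcrle l) (hDle _)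
            Metric.diam_nonneg (pow_nonneg hcr0 _)
  have hbounded : ∀ (l : List G.Edge), Bornology.IsBounded (G.toGIFS.pathSet E i l) := by
    intro l
    exact (((hE.2.1 _).image (Lem82.pathMap_continuous G.toGIFS l))).isBounded
  have hestim : ∀ n : ℕ, dist (π ω) (π γ) ≤ 2 * (cr ^ n * D) := by
    intro n
    obtain ⟨z, hz1, hz2⟩ := hint n
    have d1 : dist (π ω) z ≤ cr ^ n * D := by
      have := Metric.dist_le_diam_of_mem (hbounded (prefixList ω.1 n)) (hπ ω n) hz1
      have h2 := hdiam (prefixList ω.1 n)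
      rw [Lem82.prefixList_length] at h2
      linarith
    have d2 : dist z (π γ) ≤ cr ^ n * D := by
      have := Metric.dist_le_diam_of_mem (hbounded (prefixList γ.1 n)) hz2 (hπ γ n)
      have h2 := hdiam (prefixList γ.1 n)
      rw [Lem82.prefixList_length] at h2
      linarith
    calc dist (π ω) (π γ) ≤ dist (π ω) z + dist z (π γ) := dist_triangle _ _ _
      _ ≤ 2 * (cr ^ n * D) := by linarith
  have htend : Filter.Tendsto (fun n : ℕ => 2 * (cr ^ n * D)) Filter.atTop (nhds 0) := by
    have h0 : Filter.Tendsto (fun n : ℕ => cr ^ n) Filter.atTop (nhds 0) :=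
      tendsto_pow_atTop_nhds_zero_of_lt_one hcr0 hcr1
    have h1 := (h0.mul_const D).const_mul 2
    simpa using h1
  have hle0 : dist (π ω) (π γ) ≤ 0 :=
    ge_of_tendsto htend (Filter.Eventually.of_forall hestim)
  exact dist_le_zero.mp hle0
end
end
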